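/- arXiv:2408.09981 — 8 statements merged into one kernel-verified Lean document; each statement's English description precedes it below -/
import Mathlib

section
/- Let d be a positive integer and let T : ℓ₂(ℤ^d) → ℓ₂(ℤ^d) be a bounded (continuous) linear operator that is shift-invariant, i.e. T{x[·−k₀]} = T{x}[·−k₀] for every x ∈ ℓ₂(ℤ^d) and every k₀ ∈ ℤ^d. Then there exists one and only one h ∈ ℓ₂(ℤ^d), namely the impulse response h = T{δ}, such that for every x ∈ ℓ₂(ℤ^d) and every k ∈ ℤ^d, T{x}[k] = ∑_{m∈ℤ^d} h[m] x[k−m], where the series converges absolutely. -/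
open scoped ENNReal


/-- kernel theorem for discrete LSI operators on `ℓ₂(ℤ^d)`.
Let `T : ℓ₂(ℤ^d) → ℓ₂(ℤ^d)` be a bounded linear operator that is shift-invariant
(`T{x[·−k₀]} = T{x}[·−k₀]` for all `x` and `k₀`). Then there is one and only one
`h ∈ ℓ₂(ℤ^d)`, namely the impulse response `h = T{δ}`, such that for every `x` and `k`,
`T{x}[k] = ∑_{m} h[m] x[k−m]`, the series converging absolutely. -/
theorem kernel_theorem_scalar
    (d : ℕ) (hd : 0 < d)
    (T : lp (fun _ : Fin d → ℤ => ℝ) 2 →L[ℝ] lp (fun _ : Fin d → ℤ => ℝ) 2)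
    (hshift : ∀ (x y : lp (fun _ : Fin d → ℤ => ℝ) 2) (k₀ : Fin d → ℤ),
      (∀ k : Fin d → ℤ, y k = x (k - k₀)) → ∀ k : Fin d → ℤ, T y k = T x (k - k₀)) :
    (∀ (x : lp (fun _ : Fin d → ℤ => ℝ) 2) (k : Fin d → ℤ),
      Summable (fun m : Fin d → ℤ => |T (lp.single 2 (0 : Fin d → ℤ) (1 : ℝ)) m * x (k - m)|) ∧
      T x k = ∑' m : Fin d → ℤ, T (lp.single 2 (0 : Fin d → ℤ) (1 : ℝ)) m * x (k - m)) ∧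
    (∀ h : lp (fun _ : Fin d → ℤ => ℝ) 2,
      (∀ (x : lp (fun _ : Fin d → ℤ => ℝ) 2) (k : Fin d → ℤ),
        T x k = ∑' m : Fin d → ℤ, h m * x (k - m)) →
      h = T (lp.single 2 (0 : Fin d → ℤ) (1 : ℝ))) := by
  set H := T (lp.single 2 (0 : (Fin d → ℤ)) (1 : ℝ)) with hH
  have htop : (2 : ℝ≥0∞) ≠ ⊤ := by norm_num
  have htr : (0:ℝ) < (2 : ℝ≥0∞).toReal := by norm_num
  -- evaluation continuous linear maps
  have evC : ∀ k : (Fin d → ℤ), ∃ e : lp (fun _ : (Fin d → ℤ) => ℝ) 2 →L[ℝ] ℝ, ∀ f, e f = f k := by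
    intro k
    refine ⟨LinearMap.mkContinuous
      { toFun := fun f => f k
        map_add' := fun f g => by simp [lp.coeFn_add]
        map_smul' := fun c f => by simp [lp.coeFn_smul] } 1
      (fun f => by rw [one_mul]; exact lp.norm_apply_le_norm two_ne_zero f k), fun f => rfl⟩
  -- shifted singles
  have hsingle : ∀ (m k : (Fin d → ℤ)), T (lp.single 2 m (1 : ℝ)) k = H (k - m) := by
    intro m k
    refine hshift (lp.single 2 (0 : (Fin d → ℤ)) (1 : ℝ)) (lp.single 2 m (1 : ℝ)) m ?_ k
    intro j
    by_cases hj : j = m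
    · subst hj; simp [lp.single_apply_self]
    · rw [lp.single_apply_ne 2 m _ hj, lp.single_apply_ne 2 (0:(Fin d → ℤ)) _
        (fun h0 => hj (sub_eq_zero.mp h0))]
  constructor
  · intro x k
    -- shifted x is in ℓ²
    have hxmem : Memℓp (fun m : (Fin d → ℤ) => x (k - m)) 2 := by
      apply memℓp_gen
      have := ((lp.memℓp x).summable htr)
      exact ((Equiv.subLeft k).summable_iff
        (f := fun m : (Fin d → ℤ) => ‖x m‖ ^ (2:ℝ≥0∞).toReal)).mpr this
    -- summability (Cauchy-Schwarz via inner product on ℓ²)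
    have hsumm : Summable (fun m : (Fin d → ℤ) => |H m * x (k - m)|) := by
      have hHa : Memℓp (fun m : (Fin d → ℤ) => |H m|) 2 := by
        apply memℓp_gen
        have := (lp.memℓp H).summable htr
        simpa [Real.norm_eq_abs, abs_abs] using this
      have hXa : Memℓp (fun m : (Fin d → ℤ) => |x (k - m)|) 2 := by
        apply memℓp_gen
        have := hxmem.summable htr
        simpa [Real.norm_eq_abs, abs_abs] using this
      have := lp.summable_inner (𝕜 := ℝ) (⟨_, hHa⟩ : lp (fun _ : (Fin d → ℤ) => ℝ) 2) ⟨_, hXa⟩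
      simpa [abs_mul, real_inner_comm, RCLike.inner_apply, mul_comm] using this
    refine ⟨hsumm, ?_⟩
    -- expansion of x in singles
    have hx : HasSum (fun m : (Fin d → ℤ) => lp.single 2 m (x m)) x := lp.hasSum_single htop x
    obtain ⟨e, he⟩ := evC k
    have h1 : HasSum (fun m : (Fin d → ℤ) => e (T (lp.single 2 m (x m)))) (e (T x)) :=
      ((e.comp T).hasSum hx)
    have h2 : HasSum (fun m : (Fin d → ℤ) => x m * H (k - m)) (T x k) := by
      rw [← he (T x)]
      refine h1.congr_fun fun m => ?_
      have : lp.single 2 m (x m) = (x m • lp.single 2 m (1 : ℝ) : lp (fun _ : Fin d → ℤ => ℝ) 2) := by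
        rw [← lp.single_smul]; norm_num
      rw [he, this, map_smul, lp.coeFn_smul, Pi.smul_apply, hsingle m k, smul_eq_mul]
    have h3 : HasSum ((fun m : (Fin d → ℤ) => x m * H (k - m)) ∘ (Equiv.subLeft k)) (T x k) :=
      (Equiv.subLeft k).hasSum_iff.mpr h2
    have h4 : HasSum (fun m : (Fin d → ℤ) => H m * x (k - m)) (T x k) := by
      refine h3.congr_fun fun m => ?_
      simp [Equiv.subLeft_apply, sub_sub_cancel, mul_comm]
    exact h4.tsum_eq.symm
  · intro h hh
    refine lp.ext (funext fun k => ?_)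
    have := hh (lp.single 2 (0 : (Fin d → ℤ)) (1 : ℝ)) k
    rw [← hH] at this
    have ht : ∑' m : (Fin d → ℤ), h m * (lp.single 2 (0:(Fin d → ℤ)) (1:ℝ) : lp (fun _ : Fin d → ℤ => ℝ) 2) (k - m) = h k := by
      rw [tsum_eq_single k]
      · rw [sub_self, lp.single_apply_self, mul_one]
      · intro m hm
        rw [lp.single_apply_ne 2 (0:(Fin d → ℤ)) _ (sub_ne_zero.mpr (Ne.symm hm)), mul_zero]
    rw [ht] at this
    exact this.symm
end

section
/- Let d, N, M be positive integers and let T : ℓ₂^N(ℤ^d) → ℓ₂^M(ℤ^d) be a bounded (continuous) linear operator that is shift-invariant, i.e. T{x[·−k₀]} = T{x}[·−k₀] for every x ∈ ℓ₂^N(ℤ^d) and every k₀ ∈ ℤ^d. Then there exists one and only one matrix-valued sequence H : ℤ^d → ℝ^{M×N} whose entries are square-summable (each entry sequence in ℓ₂(ℤ^d)) such that for every x ∈ ℓ₂^N(ℤ^d) and every k ∈ ℤ^d, T{x}[k] = ∑_{m∈ℤ^d} H[m] x[k−m], where the series converges absolutely; moreover the n-th column of H equals T{e_n δ[·]}, where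 e_n is the n-th canonical basis vector of ℝ^N. -/
open scoped ENNReal

section Aux

variable {α : Type*} {ι : Type*} [Fintype ι] [DecidableEq α]

omit [DecidableEq α] in
lemma eucl_abs_apply_le (v : EuclideanSpace ℝ ι) (i : ι) : |v i| ≤ ‖v‖ := by
  rw [EuclideanSpace.norm_eq]
  have h : |v i| = Real.sqrt (‖v i‖ ^ 2) := by
    rw [Real.sqrt_sq_eq_abs, Real.norm_eq_abs, abs_abs]
  rw [h]
  exact Real.sqrt_le_sqrt (Finset.single_le_sum (fun j _ => sq_nonneg ‖v j‖) (Finset.mem_univ i))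


omit [DecidableEq α] in
lemma eucl_sum_apply {κ : Type*} (s : Finset κ) (f : κ → EuclideanSpace ℝ ι) (i : ι) :
    (∑ a ∈ s, f a) i = ∑ a ∈ s, f a i :=
  map_sum (EuclideanSpace.projₗ (𝕜 := ℝ) i) f s

omit [DecidableEq α] in
/-- Evaluation at a point & coordinate as a continuous linear map on `ℓ²`. -/
noncomputable def evalCLM (k : α) (i : ι) :
    lp (fun _ : α => EuclideanSpace ℝ ι) 2 →L[ℝ] ℝ :=
  LinearMap.mkContinuous
    { toFun := fun f => f k i
      map_add' := fun f g => by
        have := lp.coeFn_add f g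
        simp only [this, Pi.add_apply]
        rfl
      map_smul' := fun c f => by
        have := lp.coeFn_smul c f
        simp only [this, Pi.smul_apply]
        rfl }
    1 (fun f => by
      simp only [one_mul, LinearMap.coe_mk, AddHom.coe_mk, Real.norm_eq_abs]
      calc |f k i| ≤ ‖f k‖ := eucl_abs_apply_le _ _
        _ ≤ ‖f‖ := lp.norm_apply_le_norm (by norm_num) f k)

omit [DecidableEq α] in
@[simp] lemma evalCLM_apply (k : α) (i : ι)
    (f : lp (fun _ : α => EuclideanSpace ℝ ι) 2) : evalCLM k i f = f k i := rfl

omit [DecidableEq α] in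
lemma memℓp_component {f : ∀ _ : α, EuclideanSpace ℝ ι} (hf : Memℓp f 2) (i : ι) :
    Memℓp (fun k => f k i) 2 := by
  have hsum := hf.summable (p := 2) (by norm_num)
  apply memℓp_gen
  refine Summable.of_nonneg_of_le (fun k => ?_) (fun k => ?_) hsum
  · positivity
  · have h1 : (0:ℝ) ≤ ‖f k i‖ := norm_nonneg _
    have h2 : ‖f k i‖ ≤ ‖f k‖ := by
      rw [Real.norm_eq_abs]; exact eucl_abs_apply_le _ _
    exact Real.rpow_le_rpow h1 h2 (by positivity)

omit [Fintype ι] in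
lemma lp_single_sum {E : Type*} [NormedAddCommGroup E] (p : ℝ≥0∞) (m : α)
    {s : Finset ι} (v : ι → E) :
    lp.single (E := fun _ : α => E) p m (∑ n ∈ s, v n)
      = ∑ n ∈ s, lp.single p m (v n) := by
  apply lp.ext
  funext j
  rw [lp.coeFn_sum]
  by_cases h : j = m
  · subst h
    simp [lp.single_apply_self]
  · simp [lp.single_apply_ne _ _ _ h, Pi.single_apply, h]

end Aux

/-- kernel theorem for LSI operators `ℓ₂^N(ℤ^d) → ℓ₂^M(ℤ^d)`.
Let `T` be a bounded linear shift-invariant operator from `ℓ₂^N(ℤ^d)` to `ℓ₂^M(ℤ^d)`.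
Then there exists one and only one matrix-valued sequence `H : ℤ^d → ℝ^{M×N}` with
square-summable entries such that `T{x}[k] = ∑_m H[m] x[k−m]` (absolutely convergent)
for all `x` and `k`; moreover the `n`-th column of `H` equals `T{eₙ δ}`. -/
theorem kernel_theorem_multichannel
    (d N M : ℕ) (hd : 0 < d) (hN : 0 < N) (hM : 0 < M)
    (T : lp (fun _ : Fin d → ℤ => EuclideanSpace ℝ (Fin N)) 2 →L[ℝ]
         lp (fun _ : Fin d → ℤ => EuclideanSpace ℝ (Fin M)) 2)
    (hshift : ∀ (x y : lp (fun _ : Fin d → ℤ => EuclideanSpace ℝ (Fin N)) 2)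
      (k₀ : Fin d → ℤ), (∀ k : Fin d → ℤ, y k = x (k - k₀)) →
      ∀ k : Fin d → ℤ, T y k = T x (k - k₀)) :
    (∃! H : (Fin d → ℤ) → Matrix (Fin M) (Fin N) ℝ,
      (∀ (i : Fin M) (n : Fin N), Memℓp (fun k : Fin d → ℤ => H k i n) 2) ∧
      (∀ (x : lp (fun _ : Fin d → ℤ => EuclideanSpace ℝ (Fin N)) 2)
         (k : Fin d → ℤ) (i : Fin M),
        Summable (fun m : Fin d → ℤ => |∑ n : Fin N, H m i n * x (k - m) n|) ∧
        T x k i = ∑' m : Fin d → ℤ, ∑ n : Fin N, H m i n * x (k - m) n)) ∧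
    (∀ H : (Fin d → ℤ) → Matrix (Fin M) (Fin N) ℝ,
      ((∀ (i : Fin M) (n : Fin N), Memℓp (fun k : Fin d → ℤ => H k i n) 2) ∧
       (∀ (x : lp (fun _ : Fin d → ℤ => EuclideanSpace ℝ (Fin N)) 2)
          (k : Fin d → ℤ) (i : Fin M),
         Summable (fun m : Fin d → ℤ => |∑ n : Fin N, H m i n * x (k - m) n|) ∧
         T x k i = ∑' m : Fin d → ℤ, ∑ n : Fin N, H m i n * x (k - m) n)) →
      ∀ (k : Fin d → ℤ) (i : Fin M) (n : Fin N),
        H k i n =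
          T (lp.single 2 (0 : Fin d → ℤ) (EuclideanSpace.single n (1 : ℝ))) k i) := by
  classical
  -- the candidate kernel
  set H₀ : (Fin d → ℤ) → Matrix (Fin M) (Fin N) ℝ := fun k =>
    Matrix.of fun i n =>
      T (lp.single 2 (0 : Fin d → ℤ) (EuclideanSpace.single n (1 : ℝ))) k i with hH₀def
  have hH₀apply : ∀ k i n, H₀ k i n =
      T (lp.single 2 (0 : Fin d → ℤ) (EuclideanSpace.single n (1 : ℝ))) k i :=
    fun k i n => rfl
  -- shift property of T on singles
  have hTshift : ∀ (v : EuclideanSpace ℝ (Fin N)) (m k : Fin d → ℤ),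
      T (lp.single 2 m v) k = T (lp.single 2 (0 : Fin d → ℤ) v) (k - m) := by
    intro v m k
    refine hshift _ _ m (fun j => ?_) k
    by_cases h : j = m
    · subst h
      simp [lp.single_apply_self, sub_self]
    · rw [lp.single_apply_ne _ _ _ h, lp.single_apply_ne]
      exact sub_ne_zero.mpr h
  -- square-summability of the columns of H₀
  have hmem0 : ∀ (i : Fin M) (n : Fin N), Memℓp (fun k : Fin d → ℤ => H₀ k i n) 2 := by
    intro i n
    exact memℓp_component (lp.memℓp _) i
  -- absolute convergence
  have habs : ∀ (H : (Fin d → ℤ) → Matrix (Fin M) (Fin N) ℝ),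
      (∀ (i : Fin M) (n : Fin N), Memℓp (fun k : Fin d → ℤ => H k i n) 2) →
      ∀ (x : lp (fun _ : Fin d → ℤ => EuclideanSpace ℝ (Fin N)) 2)
        (k : Fin d → ℤ) (i : Fin M),
      Summable (fun m : Fin d → ℤ => |∑ n : Fin N, H m i n * x (k - m) n|) := by
    intro H hmem x k i
    have hterm : ∀ n : Fin N,
        Summable (fun m : Fin d → ℤ => |H m i n| * |x (k - m) n|) := by
      intro n
      have hA : Summable (fun m : Fin d → ℤ => ‖H m i n‖ ^ (2:ℝ≥0∞).toReal) :=
        (hmem i n).summable (by norm_num)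
      have hA2 : Summable (fun m : Fin d → ℤ => |H m i n| ^ 2) := by
        refine hA.congr fun m => ?_
        rw [Real.norm_eq_abs]
        rw [show (2:ℝ≥0∞).toReal = ((2:ℕ):ℝ) by norm_num, Real.rpow_natCast]
      have hB0 : Summable (fun m : Fin d → ℤ => ‖x m n‖ ^ (2:ℝ≥0∞).toReal) :=
        (memℓp_component (lp.memℓp x) n).summable (by norm_num)
      have hB2' : Summable (fun m : Fin d → ℤ => |x m n| ^ 2) := by
        refine hB0.congr fun m => ?_
        rw [Real.norm_eq_abs]
        rw [show (2:ℝ≥0∞).toReal = ((2:ℕ):ℝ) by norm_num, Real.rpow_natCast]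
      have hB2 : Summable (fun m : Fin d → ℤ => |x (k - m) n| ^ 2) := by
        have := ((Equiv.subLeft k).summable_iff
          (f := fun m : Fin d → ℤ => |x m n| ^ 2)).2 hB2'
        exact this
      refine Summable.of_nonneg_of_le (fun m => by positivity) (fun m => ?_)
        (((hA2.add hB2).div_const 2))
      have h2 := two_mul_le_add_sq (|H m i n|) (|x (k - m) n|)
      nlinarith [abs_nonneg (H m i n), abs_nonneg (x (k - m) n)]
    refine Summable.of_nonneg_of_le
      (f := fun m : Fin d → ℤ => ∑ n : Fin N, |H m i n| * |x (k - m) n|)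
      (fun m => abs_nonneg _) (fun m => ?_)
      (summable_sum (s := Finset.univ) fun n _ => hterm n)
    refine (Finset.abs_sum_le_sum_abs _ _).trans (le_of_eq ?_)
    exact Finset.sum_congr rfl fun n _ => abs_mul _ _
  -- main formula for H₀
  have hmain : ∀ (x : lp (fun _ : Fin d → ℤ => EuclideanSpace ℝ (Fin N)) 2)
      (k : Fin d → ℤ) (i : Fin M),
      T x k i = ∑' m : Fin d → ℤ, ∑ n : Fin N, H₀ m i n * x (k - m) n := by
    intro x k i
    have hs1 : HasSum (fun m : Fin d → ℤ => lp.single 2 m (x m)) x :=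
      lp.hasSum_single (by norm_num) x
    have hs2 : HasSum (fun m : Fin d → ℤ => T (lp.single 2 m (x m))) (T x) :=
      hs1.mapL T
    have hs3 : HasSum (fun m : Fin d → ℤ => T (lp.single 2 m (x m)) k i) (T x k i) := by
      have := hs2.mapL (evalCLM k i)
      simpa only [evalCLM_apply] using this
    have hdecomp : ∀ m : Fin d → ℤ,
        T (lp.single 2 m (x m)) k i = ∑ n : Fin N, x m n * H₀ (k - m) i n := by
      intro m
      have hxm : x m = ∑ n : Fin N, (x m n : ℝ) • EuclideanSpace.single n (1:ℝ) := by
        ext j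
        rw [eucl_sum_apply]
        simp [PiLp.smul_apply, EuclideanSpace.single_apply, Finset.sum_ite_eq']
      calc T (lp.single 2 m (x m)) k i
          = T (∑ n : Fin N, (x m n) • lp.single 2 m (EuclideanSpace.single n (1:ℝ))) k i := by
            conv_lhs => rw [hxm]
            rw [lp_single_sum]
            simp only [lp.single_smul]
        _ = (∑ n : Fin N, (x m n) • T (lp.single 2 m (EuclideanSpace.single n (1:ℝ)))) k i := by
            rw [map_sum]
            simp only [map_smul]
        _ = ∑ n : Fin N, (x m n) * (T (lp.single 2 m (EuclideanSpace.single n (1:ℝ))) k i) := by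
            rw [lp.coeFn_sum, Finset.sum_apply, eucl_sum_apply]
            exact Finset.sum_congr rfl fun n _ => by
              rw [lp.coeFn_smul, Pi.smul_apply, PiLp.smul_apply, smul_eq_mul]
        _ = ∑ n : Fin N, x m n * H₀ (k - m) i n := by
            refine Finset.sum_congr rfl fun n _ => ?_
            congr 1
            have := hTshift (EuclideanSpace.single n (1:ℝ)) m k
            rw [hH₀apply]
            exact congrArg (fun v => v i) this
    rw [funext hdecomp] at hs3
    have hs4 : HasSum (fun m : Fin d → ℤ => ∑ n : Fin N, H₀ m i n * x (k - m) n) (T x k i) := by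
      have h5 := ((Equiv.subLeft k).hasSum_iff).2 hs3
      have heq : (fun m : Fin d → ℤ => ∑ n : Fin N, H₀ m i n * x (k - m) n)
          = (fun m : Fin d → ℤ => ∑ n : Fin N, x m n * H₀ (k - m) i n) ∘ (Equiv.subLeft k) := by
        funext m
        simp only [Function.comp_apply, Equiv.subLeft_apply, sub_sub_cancel]
        exact Finset.sum_congr rfl fun n _ => mul_comm _ _
      rw [heq]
      exact h5
    exact hs4.tsum_eq.symm
  -- uniqueness computation
  have huniq : ∀ H : (Fin d → ℤ) → Matrix (Fin M) (Fin N) ℝ,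
      ((∀ (i : Fin M) (n : Fin N), Memℓp (fun k : Fin d → ℤ => H k i n) 2) ∧
       (∀ (x : lp (fun _ : Fin d → ℤ => EuclideanSpace ℝ (Fin N)) 2)
          (k : Fin d → ℤ) (i : Fin M),
         Summable (fun m : Fin d → ℤ => |∑ n : Fin N, H m i n * x (k - m) n|) ∧
         T x k i = ∑' m : Fin d → ℤ, ∑ n : Fin N, H m i n * x (k - m) n)) →
      ∀ (k : Fin d → ℤ) (i : Fin M) (n : Fin N),
        H k i n =
          T (lp.single 2 (0 : Fin d → ℤ) (EuclideanSpace.single n (1 : ℝ))) k i := by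
    intro H hH k i n
    have h2 := (hH.2 (lp.single 2 (0 : Fin d → ℤ) (EuclideanSpace.single n (1 : ℝ))) k i).2
    rw [h2]
    rw [tsum_eq_single k ?_]
    · have h0 : (lp.single (E := fun _ : Fin d → ℤ => EuclideanSpace ℝ (Fin N)) 2
          (0 : Fin d → ℤ) (EuclideanSpace.single n (1 : ℝ))) (k - k)
          = EuclideanSpace.single n (1:ℝ) := by
        rw [sub_self, lp.single_apply_self]
      rw [h0]
      simp [EuclideanSpace.single_apply, Finset.sum_ite_eq', mul_comm]
    · intro m hm
      have h0 : (lp.single (E := fun _ : Fin d → ℤ => EuclideanSpace ℝ (Fin N)) 2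
          (0 : Fin d → ℤ) (EuclideanSpace.single n (1 : ℝ))) (k - m) = 0 :=
        lp.single_apply_ne _ _ _ (sub_ne_zero.mpr (Ne.symm hm))
      rw [h0]
      simp
  refine ⟨⟨H₀, ⟨hmem0, fun x k i => ⟨habs H₀ hmem0 x k i, hmain x k i⟩⟩, ?_⟩, huniq⟩
  intro H' hH'
  funext k
  ext i n
  rw [huniq H' hH' k i n, hH₀apply]
end

section
/- Let d be a positive integer and let h : ℤ^d → ℝ be finitely supported (an FIR filter). Then the convolution operator T_h : ℓ₂(ℤ^d) → ℓ₂(ℤ^d), x ↦ h ∗ x, is an isometry — equivalently, ∑_{m∈ℤ^d} h[m] h[m+k] = δ[k] for all k ∈ ℤ^d — if and only if there exist k₀ ∈ ℤ^d and a sign ε ∈ {+1, −1} such that h = ε δ[·−k₀]; in other words, the only scalar FIR Parseval filters are T_h = ± S^{k₀}, where S^{k₀} : x[·] ↦ x[·−k₀] is the shift operator. -/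
lemma lp2_norm_sq {α : Type*} (f : lp (fun _ : α => ℝ) 2) :
    ‖f‖ ^ 2 = ∑' j, ((f : α → ℝ) j) ^ 2 := by
  have h := lp.norm_rpow_eq_tsum (p := 2) (E := fun _ : α => ℝ)
    (by rw [ENNReal.toReal_ofNat]; norm_num) f
  rw [ENNReal.toReal_ofNat] at h
  calc ‖f‖ ^ 2 = ‖f‖ ^ (2:ℝ) := by
        rw [show (2:ℝ) = ((2:ℕ):ℝ) by norm_num, Real.rpow_natCast]
    _ = ∑' j, ‖(f : α → ℝ) j‖ ^ (2:ℝ) := h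
    _ = ∑' j, ((f : α → ℝ) j) ^ 2 := by
        apply tsum_congr; intro j
        rw [show (2:ℝ) = ((2:ℕ):ℝ) by norm_num, Real.rpow_natCast,
          Real.norm_eq_abs, sq_abs]

lemma lp2_single_apply {α : Type*} [DecidableEq α] (i j : α) (a : ℝ) :
    ((lp.single 2 i a : lp (fun _ : α => ℝ) 2) : α → ℝ) j = if j = i then a else 0 := by
  rw [lp.single_apply]
  split <;> simp_all

lemma isometry_to_corr {d : ℕ} (h : (Fin d → ℤ) → ℝ) (hfin : (Function.support h).Finite)
    (hA : ∀ x : lp (fun _ : Fin d → ℤ => ℝ) 2,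
        ∃ u : lp (fun _ : Fin d → ℤ => ℝ) 2,
          (∀ k : Fin d → ℤ, u k = ∑' m : Fin d → ℤ, h m * x (k - m)) ∧ ‖u‖ = ‖x‖) :
    ∀ k : Fin d → ℤ,
      ∑' m : Fin d → ℤ, h m * h (m + k) = if k = 0 then 1 else 0 := by
  classical
  set s : Finset (Fin d → ℤ) := hfin.toFinset with hs
  have hmem : ∀ m : Fin d → ℤ, m ∈ s ↔ h m ≠ 0 := by
    intro m; simp [hs, Set.Finite.mem_toFinset, Function.mem_support]
  have hzero : ∀ m : Fin d → ℤ, m ∉ s → h m = 0 := by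
    intro m hm; by_contra hne; exact hm ((hmem m).2 hne)
  set e : (Fin d → ℤ) → lp (fun _ : Fin d → ℤ => ℝ) 2 :=
    fun i => lp.single 2 i (1:ℝ) with he'
  have he : ∀ i j : Fin d → ℤ, (e i : (Fin d → ℤ) → ℝ) j = if j = i then 1 else 0 := by
    intro i j
    rw [he']
    exact lp2_single_apply i j 1
  -- Step 1 : autocorrelation at 0
  have S0 : ∑' j : Fin d → ℤ, (h j) ^ 2 = 1 := by
    obtain ⟨u, hu, hn⟩ := hA (e 0)
    have huj : ∀ j, (u : (Fin d → ℤ) → ℝ) j = h j := by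
      intro j
      rw [hu j, tsum_eq_single j ?_]
      · rw [sub_self, he, if_pos rfl, mul_one]
      · intro m hm
        rw [he, if_neg (fun hq => hm (by
          have : j - m = 0 := hq
          have := sub_eq_zero.1 this
          exact this.symm)), mul_zero]
    have hE : ∑' j : Fin d → ℤ, ((e 0 : (Fin d → ℤ) → ℝ) j) ^ 2 = 1 := by
      rw [tsum_eq_single (0 : Fin d → ℤ) ?_]
      · rw [he, if_pos rfl]; norm_num
      · intro m hm; rw [he, if_neg hm]; norm_num
    calc ∑' j : Fin d → ℤ, (h j) ^ 2
        = ∑' j : Fin d → ℤ, ((u : (Fin d → ℤ) → ℝ) j) ^ 2 := by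
          apply tsum_congr; intro j; rw [huj j]
      _ = ‖u‖ ^ 2 := (lp2_norm_sq u).symm
      _ = ‖e 0‖ ^ 2 := by rw [hn]
      _ = 1 := by rw [lp2_norm_sq (e 0), hE]
  have S0' : ∑ j ∈ s, (h j) ^ 2 = 1 := by
    rw [← tsum_eq_sum (L := SummationFilter.unconditional _) (f := fun j => (h j)^2) (s := s) (fun m hm => by show h m ^ 2 = 0; rw [hzero m hm]; ring)]
    exact S0
  intro k
  by_cases hk : k = 0
  · rw [if_pos hk, hk]
    rw [tsum_eq_sum (s := s) (fun m hm => by show h m * h _ = 0; rw [hzero m hm]; ring)]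
    rw [← S0']
    apply Finset.sum_congr rfl
    intro m _; rw [add_zero]; ring
  · rw [if_neg hk]
    -- apply the isometry to e 0 + e k
    obtain ⟨u, hu, hn⟩ := hA (e 0 + e k)
    have hx : ∀ j, ((e 0 + e k : lp (fun _ : Fin d → ℤ => ℝ) 2) : (Fin d → ℤ) → ℝ) j
        = (if j = 0 then 1 else 0) + (if j = k then 1 else 0) := by
      intro j; rw [lp.coeFn_add, Pi.add_apply, he, he]
    have h0k : (0 : Fin d → ℤ) ≠ k := fun hq => hk hq.symm
    have hxn : ‖(e 0 + e k : lp (fun _ : Fin d → ℤ => ℝ) 2)‖ ^ 2 = 2 := by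
      rw [lp2_norm_sq]
      rw [tsum_eq_sum (s := ({0, k} : Finset (Fin d → ℤ))) ?van]
      · rw [Finset.sum_pair h0k, hx, hx, if_pos rfl, if_neg h0k, if_neg h0k.symm, if_pos rfl]
        norm_num
      case van =>
        intro j hj
        simp only [Finset.mem_insert, Finset.mem_singleton, not_or] at hj
        rw [hx, if_neg hj.1, if_neg hj.2]; norm_num
    have huj : ∀ j, (u : (Fin d → ℤ) → ℝ) j = h j + h (j - k) := by
      intro j
      have hjj : j ≠ j - k := by
        intro hq
        exact hk (sub_eq_self.1 hq.symm)
      rw [hu j, tsum_eq_sum (s := ({j, j - k} : Finset (Fin d → ℤ))) ?van]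
      · rw [Finset.sum_pair hjj, hx, hx]
        have e1 : j - j = 0 := sub_self j
        have e2 : j - (j - k) = k := sub_sub_cancel j k
        rw [e1, e2, if_pos rfl, if_neg h0k.symm, if_pos rfl]
        have : ¬ (0 : Fin d → ℤ) = k := h0k
        rw [if_neg fun hq => hk (by simpa using hq.symm)]
        ring
      case van =>
        intro m hm
        simp only [Finset.mem_insert, Finset.mem_singleton, not_or] at hm
        rw [hx, if_neg, if_neg]
        · ring
        · intro hq
          exact hm.2 (by rw [← hq]; abel)
        · intro hq
          exact hm.1 (by rw [← sub_eq_zero.1 hq])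
    -- sum over the union finset
    set t : Finset (Fin d → ℤ) := s ∪ s.image (fun m => m + k) with ht
    have hvt : ∀ j ∉ t, h j = 0 ∧ h (j - k) = 0 := by
      intro j hj
      rw [ht, Finset.mem_union, not_or] at hj
      refine ⟨hzero j hj.1, ?_⟩
      by_contra hne
      apply hj.2
      have : j - k ∈ s := (hmem _).2 hne
      have : (j - k) + k ∈ s.image (fun m => m + k) := Finset.mem_image_of_mem _ this
      simpa using this
    have hT : ∑ j ∈ t, (h j + h (j - k)) ^ 2 = 2 := by
      rw [← tsum_eq_sum (L := SummationFilter.unconditional _) (f := fun j => (h j + h (j - k))^2) (s := t)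
        (fun j hj => by show (h j + h (j - k)) ^ 2 = 0; rw [(hvt j hj).1, (hvt j hj).2]; ring)]
      calc ∑' j : Fin d → ℤ, (h j + h (j - k)) ^ 2
          = ∑' j : Fin d → ℤ, ((u : (Fin d → ℤ) → ℝ) j) ^ 2 := by
            apply tsum_congr; intro j; rw [huj j]
        _ = ‖u‖ ^ 2 := (lp2_norm_sq u).symm
        _ = 2 := by rw [hn, hxn]
    have hinj : ∀ m ∈ s, ∀ m' ∈ s, m + k = m' + k → m = m' := by
      intro m _ m' _ hq; exact add_right_cancel hq
    have hA1 : ∑ j ∈ t, (h j) ^ 2 = 1 := by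
      rw [← Finset.sum_subset (Finset.subset_union_left)
        (fun j _ hj => by rw [hzero j hj]; ring)]
      exact S0'
    have himvan : ∀ j ∈ t, j ∉ s.image (fun m => m + k) → h (j - k) = 0 := by
      intro j _ hj
      by_contra hne
      apply hj
      have h1 : j - k ∈ s := (hmem _).2 hne
      have h2 : (j - k) + k ∈ s.image (fun m => m + k) := Finset.mem_image_of_mem _ h1
      simpa using h2
    have hA2 : ∑ j ∈ t, (h (j - k)) ^ 2 = 1 := by
      rw [← Finset.sum_subset (Finset.subset_union_right)
        (fun j hjt hj => by rw [himvan j hjt hj]; ring)]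
      rw [Finset.sum_image hinj]
      rw [← S0']
      apply Finset.sum_congr rfl
      intro m _; rw [add_sub_cancel_right]
    have hA3 : ∑ j ∈ t, h j * h (j - k) = ∑ m ∈ s, h m * h (m + k) := by
      rw [← Finset.sum_subset (Finset.subset_union_right)
        (fun j hjt hj => by rw [himvan j hjt hj]; ring)]
      rw [Finset.sum_image hinj]
      apply Finset.sum_congr rfl
      intro m _; rw [add_sub_cancel_right]; ring
    have hexp : ∑ j ∈ t, (h j + h (j - k)) ^ 2
        = ∑ j ∈ t, (h j) ^ 2 + ∑ j ∈ t, (h (j - k)) ^ 2 + 2 * ∑ j ∈ t, h j * h (j - k) := by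
      rw [← Finset.sum_add_distrib, Finset.mul_sum, ← Finset.sum_add_distrib]
      apply Finset.sum_congr rfl
      intro j _; ring
    rw [tsum_eq_sum (s := s) (fun m hm => by show h m * h _ = 0; rw [hzero m hm]; ring)]
    have := hT
    rw [hexp, hA1, hA2, hA3] at this
    linarith

lemma shift_isometry {d : ℕ} (h : (Fin d → ℤ) → ℝ) (k₀ : Fin d → ℤ) (ε : ℝ)
    (hε : ε = 1 ∨ ε = -1) (hh : ∀ k : Fin d → ℤ, h k = if k = k₀ then ε else 0) :
    ∀ x : lp (fun _ : Fin d → ℤ => ℝ) 2,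
      ∃ u : lp (fun _ : Fin d → ℤ => ℝ) 2,
        (∀ k : Fin d → ℤ, u k = ∑' m : Fin d → ℤ, h m * x (k - m)) ∧ ‖u‖ = ‖x‖ := by
  intro x
  have hεa : |ε| = 1 := by rcases hε with rfl | rfl <;> norm_num
  have hp : 0 < (2 : ENNReal).toReal := by rw [ENNReal.toReal_ofNat]; norm_num
  have hx2 : Summable fun j : Fin d → ℤ => ‖(x : (Fin d → ℤ) → ℝ) j‖ ^ (2:ℝ) :=
    (lp.memℓp x).summable hp
  set f : (Fin d → ℤ) → ℝ := fun j => ε * x (j - k₀) with hf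
  have hfn : ∀ j, ‖f j‖ ^ (2:ℝ) =
      ((fun j => ‖(x : (Fin d → ℤ) → ℝ) j‖ ^ (2:ℝ)) ∘ (Equiv.subRight k₀)) j := by
    intro j
    simp only [hf, Function.comp_apply, Equiv.subRight_apply, Real.norm_eq_abs, abs_mul, hεa,
      one_mul]
  have hsum : Summable fun j => ‖f j‖ ^ (2:ℝ) := by
    rw [show (fun j => ‖f j‖ ^ (2:ℝ)) =
      ((fun j => ‖(x : (Fin d → ℤ) → ℝ) j‖ ^ (2:ℝ)) ∘ (Equiv.subRight k₀)) from funext hfn]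
    exact ((Equiv.subRight k₀).summable_iff).2 hx2
  have hmem : Memℓp f 2 := memℓp_gen (by rw [ENNReal.toReal_ofNat]; exact_mod_cast hsum)
  refine ⟨⟨f, hmem⟩, ?_, ?_⟩
  · intro k
    have : ∑' m : Fin d → ℤ, h m * x (k - m) = h k₀ * x (k - k₀) := by
      apply tsum_eq_single
      intro m hm
      rw [hh m, if_neg hm, zero_mul]
    rw [this, hh k₀, if_pos rfl]
  · have hsq : ‖(⟨f, hmem⟩ : lp (fun _ : Fin d → ℤ => ℝ) 2)‖ ^ 2 = ‖x‖ ^ 2 := by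
      rw [lp2_norm_sq, lp2_norm_sq]
      have hcoe : ∀ j, ((⟨f, hmem⟩ : lp (fun _ : Fin d → ℤ => ℝ) 2) : (Fin d → ℤ) → ℝ) j
          = f j := fun j => rfl
      calc ∑' j, (((⟨f, hmem⟩ : lp (fun _ : Fin d → ℤ => ℝ) 2) : (Fin d → ℤ) → ℝ) j) ^ 2
          = ∑' j, ((x : (Fin d → ℤ) → ℝ) ((Equiv.subRight k₀) j)) ^ 2 := by
            apply tsum_congr; intro j
            rw [hcoe j, hf]
            simp only [Equiv.subRight_apply, mul_pow]
            rw [show ε ^ 2 = 1 by rcases hε with rfl | rfl <;> norm_num, one_mul]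
        _ = ∑' j, ((x : (Fin d → ℤ) → ℝ) j) ^ 2 :=
            (Equiv.subRight k₀).tsum_eq (fun j => ((x : (Fin d → ℤ) → ℝ) j) ^ 2)
    have h1 : (0:ℝ) ≤ ‖(⟨f, hmem⟩ : lp (fun _ : Fin d → ℤ => ℝ) 2)‖ := norm_nonneg _
    have h2 : (0:ℝ) ≤ ‖x‖ := norm_nonneg _
    nlinarith [hsq]


lemma corr_to_shift {d : ℕ} (h : (Fin d → ℤ) → ℝ) (hfin : (Function.support h).Finite)
    (hc : ∀ k : Fin d → ℤ, ∑' m : Fin d → ℤ, h m * h (m + k) = if k = 0 then 1 else 0) :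
    ∃ (k₀ : Fin d → ℤ) (ε : ℝ), (ε = 1 ∨ ε = -1) ∧
      ∀ k : Fin d → ℤ, h k = if k = k₀ then ε else 0 := by
  classical
  haveI : WellFoundedLT (Fin d) := Finite.to_wellFoundedLT
  set s : Finset (Fin d → ℤ) := hfin.toFinset with hs
  have hmem : ∀ m : Fin d → ℤ, m ∈ s ↔ h m ≠ 0 := by
    intro m; simp [hs, Set.Finite.mem_toFinset, Function.mem_support]
  have hsum : ∀ k : Fin d → ℤ, ∑ m ∈ s, h m * h (m + k) = if k = 0 then 1 else 0 := by
    intro k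
    rw [← tsum_eq_sum (L := SummationFilter.unconditional _) (f := fun m => h m * h (m + k)) (s := s), hc k]
    intro m hm
    have : h m = 0 := by by_contra hne; exact hm ((hmem m).2 hne)
    simp [this]
  have h0 : ∑ m ∈ s, h m * h m = 1 := by simpa using hsum 0
  have hne : s.Nonempty := by
    by_contra hemp
    rw [Finset.not_nonempty_iff_eq_empty] at hemp
    rw [hemp] at h0; simp at h0
  set sL : Finset (Lex (Fin d → ℤ)) := s.image toLex with hsL
  have hneL : sL.Nonempty := hne.image _
  set a := sL.max' hneL with hadef
  set b := sL.min' hneL with hbdef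
  have hmemL : ∀ m ∈ s, toLex m ∈ sL := fun m hm => Finset.mem_image_of_mem _ hm
  have hb_le : ∀ m ∈ s, b ≤ toLex m := fun m hm => sL.min'_le _ (hmemL m hm)
  have hle_a : ∀ m ∈ s, toLex m ≤ a := fun m hm => sL.le_max' _ (hmemL m hm)
  have ha_mem : ofLex a ∈ s := by
    obtain ⟨m, hm, hma⟩ := Finset.mem_image.1 (sL.max'_mem hneL)
    have h2 : ofLex a = m := by rw [hadef, ← hma]; rfl
    rwa [h2]
  have hb_mem : ofLex b ∈ s := by
    obtain ⟨m, hm, hma⟩ := Finset.mem_image.1 (sL.min'_mem hneL)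
    have h2 : ofLex b = m := by rw [hbdef, ← hma]; rfl
    rwa [h2]
  set k : Fin d → ℤ := ofLex a - ofLex b with hk
  have hkey : ∑ m ∈ s, h m * h (m + k) = h (ofLex b) * h (ofLex a) := by
    rw [Finset.sum_eq_single_of_mem (ofLex b) hb_mem]
    · have heq : ofLex b + k = ofLex a := by rw [hk]; abel
      rw [heq]
    · intro m hm hmb
      have hblt : b < toLex m := lt_of_le_of_ne (hb_le m hm) (by
        intro hbm
        apply hmb
        have : ofLex b = ofLex (toLex m) := by rw [hbm]
        simpa using this.symm)
      have hgt : a < toLex (m + k) := by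
        have h1 : toLex (ofLex b + k) < toLex (m + k) := by
          have := add_lt_add_right hblt (toLex k)
          simpa using this
        have h2 : toLex (ofLex b + k) = a := by
          rw [hk]
          have : ofLex b + (ofLex a - ofLex b) = ofLex a := by abel
          rw [this]; simp
        rwa [h2] at h1
      have : h (m + k) = 0 := by
        by_contra hcon
        exact absurd (hle_a _ ((hmem _).2 hcon)) (not_le.2 hgt)
      simp [this]
  have hab : a = b := by
    by_contra hab
    have hk0 : k ≠ 0 := by
      rw [hk, sub_ne_zero]
      intro hq; exact hab (by simpa using congrArg toLex hq)
    have := hsum k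
    rw [hkey, if_neg hk0] at this
    exact absurd this (mul_ne_zero ((hmem _).1 hb_mem) ((hmem _).1 ha_mem))
  have hsingle : ∀ m ∈ s, m = ofLex a := by
    intro m hm
    have h1 := hle_a m hm
    have h2 := hb_le m hm
    rw [← hab] at h2
    have : toLex m = a := le_antisymm h1 h2
    simpa using congrArg ofLex this
  have hseq : s = {ofLex a} := by
    apply Finset.eq_singleton_iff_unique_mem.2 ⟨ha_mem, hsingle⟩
  have hε : h (ofLex a) * h (ofLex a) = 1 := by
    rw [hseq] at h0; simpa using h0
  refine ⟨ofLex a, h (ofLex a), mul_self_eq_one_iff.1 hε, ?_⟩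
  intro m
  by_cases hm : m = ofLex a
  · simp [hm]
  · rw [if_neg hm]
    by_contra hcon
    exact hm (hsingle m ((hmem m).2 hcon))


/-- Let `h : ℤ^d → ℝ` be finitely supported (an FIR filter). Then the
convolution operator `T_h : ℓ₂(ℤ^d) → ℓ₂(ℤ^d)`, `x ↦ h ∗ x`, is an isometry —
equivalently, `∑_m h[m] h[m+k] = δ[k]` for all `k` — if and only if there exist
`k₀ ∈ ℤ^d` and a sign `ε ∈ {+1, −1}` such that `h = ε δ[·−k₀]`; i.e. the only scalar FIR
Parseval filters are `T_h = ± S^{k₀}`. -/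
theorem scalar_fir_parseval_iff_shift
    (d : ℕ) (hd : 0 < d) (h : (Fin d → ℤ) → ℝ)
    (hfin : (Function.support h).Finite) :
    ((∀ x : lp (fun _ : Fin d → ℤ => ℝ) 2,
        ∃ u : lp (fun _ : Fin d → ℤ => ℝ) 2,
          (∀ k : Fin d → ℤ, u k = ∑' m : Fin d → ℤ, h m * x (k - m)) ∧ ‖u‖ = ‖x‖) ↔
      (∃ (k₀ : Fin d → ℤ) (ε : ℝ), (ε = 1 ∨ ε = -1) ∧
        ∀ k : Fin d → ℤ, h k = if k = k₀ then ε else 0)) ∧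
    ((∀ x : lp (fun _ : Fin d → ℤ => ℝ) 2,
        ∃ u : lp (fun _ : Fin d → ℤ => ℝ) 2,
          (∀ k : Fin d → ℤ, u k = ∑' m : Fin d → ℤ, h m * x (k - m)) ∧ ‖u‖ = ‖x‖) ↔
      (∀ k : Fin d → ℤ,
        ∑' m : Fin d → ℤ, h m * h (m + k) = if k = 0 then 1 else 0)) := by
  constructor
  · constructor
    · intro hA
      exact corr_to_shift h hfin (isometry_to_corr h hfin hA)
    · rintro ⟨k₀, ε, hε, hh⟩
      exact shift_isometry h k₀ ε hε hh
  · constructor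
    · intro hA
      exact isometry_to_corr h hfin hA
    · intro hc
      obtain ⟨k₀, ε, hε, hh⟩ := corr_to_shift h hfin hc
      exact shift_isometry h k₀ ε hε hh
end

section
/- Let d, N, p be positive integers, let U ∈ ℝ^{pN×pN} be an orthogonal matrix partitioned columnwise as U = [U₁ ⋯ U_p] with blocks U_i ∈ ℝ^{pN×N}, and let k₁, …, k_p ∈ ℤ^d. Define the matrix-valued filter H : ℤ^d → ℝ^{pN×N} by H[·] = (1/√p) ∑_{i=1}^{p} U_i δ[·−k_i]. Then (H^{T∨} ∗ H)[k] = ∑_{m∈ℤ^d} H[m]ᵀ H[m+k] = I_N δ[k] for all k ∈ ℤ^d, and consequently the convolution operator T_H : ℓ₂^N(ℤ^d) → ℓ₂^{pN}(ℤ^d), x ↦ H ∗ x, is an isometry. -/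
open Matrix

lemma tsum_ite_kappa {d p : ℕ} (κ : Fin p → (Fin d → ℤ)) (F : Fin p → (Fin d → ℤ) → ℝ) :
    ∑' m : Fin d → ℤ, ∑ i : Fin p, (if m = κ i then F i m else 0) = ∑ i : Fin p, F i (κ i) := by
  classical
  rw [tsum_eq_sum (s := Finset.image κ Finset.univ)
    (fun m hm => Finset.sum_eq_zero fun i _ => by
      rw [if_neg]; rintro rfl; exact hm (Finset.mem_image_of_mem κ (Finset.mem_univ i)))]
  rw [Finset.sum_comm]
  refine Finset.sum_congr rfl fun i _ => ?_
  rw [Finset.sum_ite_eq' _ (κ i) (F i),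
    if_pos (Finset.mem_image_of_mem κ (Finset.mem_univ i))]

lemma orth_parseval {ι : Type*} [Fintype ι] [DecidableEq ι]
    (U : Matrix ι ι ℝ) (hU : Uᵀ * U = 1) (a : ι → ℝ) :
    ∑ r, (∑ q, U r q * a q) ^ 2 = ∑ q, (a q) ^ 2 := by
  have hUo : ∀ q q', ∑ r, U r q * U r q' = if q = q' then 1 else 0 := by
    intro q q'
    have := congrFun (congrFun hU q) q'
    simpa [Matrix.mul_apply, Matrix.transpose_apply, Matrix.one_apply] using this
  have h1 : ∑ r, (∑ q, U r q * a q) ^ 2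
      = ∑ q, ∑ q', a q * a q' * ∑ r, U r q * U r q' := by
    simp_rw [sq, Finset.sum_mul_sum]
    rw [Finset.sum_comm]
    refine Finset.sum_congr rfl fun q _ => ?_
    rw [Finset.sum_comm]
    refine Finset.sum_congr rfl fun q' _ => ?_
    rw [Finset.mul_sum]
    exact Finset.sum_congr rfl fun r _ => by ring
  rw [h1]
  simp [hUo, mul_ite, Finset.sum_ite_eq, sq]

set_option maxHeartbeats 1000000 in
/-- Let `U ∈ ℝ^{pN×pN}` be an orthogonal matrix partitioned columnwise
into blocks `U_i ∈ ℝ^{pN×N}` (here indexed by `Fin p × Fin N`, the block `U_i` consisting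
of the columns `(i, ·)`), and let `k₁, …, k_p ∈ ℤ^d`. Define
`H[·] = (1/√p) ∑_i U_i δ[·−k_i]`. Then `(H^{T∨} ∗ H)[k] = I_N δ[k]` for all `k`, and
consequently the convolution operator `T_H : ℓ₂^N(ℤ^d) → ℓ₂^{pN}(ℤ^d)` is an isometry. -/
theorem parseval_N_to_pN_module
    (d N p : ℕ) (hd : 0 < d) (hN : 0 < N) (hp : 0 < p)
    (U : Matrix (Fin p × Fin N) (Fin p × Fin N) ℝ)
    (hU : Uᵀ * U = 1)
    (κ : Fin p → (Fin d → ℤ))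
    (H : (Fin d → ℤ) → Matrix (Fin p × Fin N) (Fin N) ℝ)
    (hH : ∀ (k : Fin d → ℤ) (r : Fin p × Fin N) (n : Fin N),
      H k r n = (Real.sqrt p)⁻¹ * ∑ i : Fin p, if k = κ i then U r (i, n) else 0) :
    (∀ (k : Fin d → ℤ) (n n' : Fin N),
      ∑' m : Fin d → ℤ, ((H m)ᵀ * H (m + k)) n n' =
        if k = 0 then (1 : Matrix (Fin N) (Fin N) ℝ) n n' else 0) ∧
    (∀ x : lp (fun _ : Fin d → ℤ => EuclideanSpace ℝ (Fin N)) 2,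
      ∃ u : lp (fun _ : Fin d → ℤ => EuclideanSpace ℝ (Fin p × Fin N)) 2,
        (∀ (k : Fin d → ℤ) (r : Fin p × Fin N),
          u k r = ∑' m : Fin d → ℤ, ∑ n : Fin N, H m r n * x (k - m) n) ∧
        ‖u‖ = ‖x‖) := by
  classical
  constructor
  · classical
    have hUo : ∀ q q', ∑ r, U r q * U r q' = if q = q' then 1 else 0 := by
      intro q q'
      have := congrFun (congrFun hU q) q'
      simpa [Matrix.mul_apply, Matrix.transpose_apply, Matrix.one_apply] using this
    have hcc : ((Real.sqrt p)⁻¹ : ℝ) * (Real.sqrt p)⁻¹ = (p : ℝ)⁻¹ := by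
      rw [← mul_inv, Real.mul_self_sqrt (by positivity)]
    intro k n n'
    have hform : ∀ m : Fin d → ℤ, ((H m)ᵀ * H (m + k)) n n' =
        ∑ i : Fin p, if m = κ i then
          (∑ j : Fin p, if κ i + k = κ j then
            (p : ℝ)⁻¹ * (if (i, n) = (j, n') then 1 else 0) else 0) else 0 := by
      intro m
      rw [Matrix.mul_apply]
      have hterm : ∀ r, (H m)ᵀ n r * H (m + k) r n' =
          ∑ i : Fin p, ∑ j : Fin p,
            if m = κ i ∧ m + k = κ j then (p : ℝ)⁻¹ * (U r (i, n) * U r (j, n')) else 0 := by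
        intro r
        rw [Matrix.transpose_apply, hH, hH, mul_mul_mul_comm, hcc, Finset.sum_mul_sum,
          Finset.mul_sum]
        refine Finset.sum_congr rfl fun i _ => ?_
        rw [Finset.mul_sum]
        refine Finset.sum_congr rfl fun j _ => ?_
        rw [ite_zero_mul_ite_zero, mul_ite, mul_zero]
      simp_rw [hterm]
      rw [Finset.sum_comm]
      refine Finset.sum_congr rfl fun i _ => ?_
      rw [Finset.sum_comm]
      by_cases hm : m = κ i
      · rw [if_pos hm]
        refine Finset.sum_congr rfl fun j _ => ?_
        rw [Finset.sum_ite_irrel, Finset.sum_const_zero, ← Finset.mul_sum, hUo]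
        subst hm
        by_cases h2 : κ i + k = κ j <;> simp [h2]
      · rw [if_neg hm]
        refine Finset.sum_eq_zero fun j _ => ?_
        refine Finset.sum_eq_zero fun r _ => ?_
        rw [if_neg (fun h => hm h.1)]
    simp_rw [hform]
    rw [tsum_ite_kappa]
    have hT : ∀ i j : Fin p,
        (if κ i + k = κ j then (p : ℝ)⁻¹ * (if (i, n) = (j, n') then 1 else 0) else 0)
          = if k = 0 ∧ i = j ∧ n = n' then (p : ℝ)⁻¹ else 0 := by
      intro i j
      by_cases hk : k = 0 <;> by_cases hij : i = j <;> by_cases hnn : n = n' <;>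
        subst_vars <;> simp_all [Prod.ext_iff, add_eq_left]
    simp_rw [hT]
    by_cases hk : k = 0 <;> by_cases hnn : n = n' <;>
      simp [hk, hnn, Finset.sum_ite_eq, Matrix.one_apply, Finset.card_univ, hp.ne']
  · classical
    have hcc : ((Real.sqrt p)⁻¹ : ℝ) * (Real.sqrt p)⁻¹ = (p : ℝ)⁻¹ := by
      rw [← mul_inv, Real.mul_self_sqrt (by positivity)]
    intro x
    set v : ∀ _ : Fin d → ℤ, EuclideanSpace ℝ (Fin p × Fin N) :=
      fun k => WithLp.toLp 2 (fun r => (Real.sqrt p)⁻¹ * ∑ q : Fin p × Fin N, U r q * x (k - κ q.1) q.2) with hv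
    -- norm of x pointwise squares
    have hxn : ∀ k : Fin d → ℤ, ‖x k‖ ^ (2 : ℝ) = ∑ n, (x k n) ^ 2 := by
      intro k
      have h1 : ‖x k‖ ^ (2:ℝ) = ‖x k‖ ^ (2:ℕ) := by
        rw [← Real.rpow_natCast ‖x k‖ 2]; norm_num
      rw [h1, EuclideanSpace.norm_eq, Real.sq_sqrt (by positivity)]
      exact Finset.sum_congr rfl fun n _ => by rw [Real.norm_eq_abs, sq_abs]
    have hvn : ∀ k : Fin d → ℤ, ‖v k‖ ^ (2 : ℝ) = ∑ r, (v k r) ^ 2 := by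
      intro k
      have h1 : ‖v k‖ ^ (2:ℝ) = ‖v k‖ ^ (2:ℕ) := by
        rw [← Real.rpow_natCast ‖v k‖ 2]; norm_num
      rw [h1, EuclideanSpace.norm_eq, Real.sq_sqrt (by positivity)]
      exact Finset.sum_congr rfl fun r _ => by rw [Real.norm_eq_abs, sq_abs]
    have hB : ∀ k, ∑ r, (v k r) ^ 2
        = (p:ℝ)⁻¹ * ∑ q : Fin p × Fin N, (x (k - κ q.1) q.2) ^ 2 := by
      intro k
      have h1 : ∀ r, (v k r) ^ 2
          = (p:ℝ)⁻¹ * (∑ q : Fin p × Fin N, U r q * x (k - κ q.1) q.2) ^ 2 := by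
        intro r
        show ((Real.sqrt p)⁻¹ * _) ^ 2 = _
        rw [mul_pow, sq ((Real.sqrt p)⁻¹ : ℝ), hcc]
      simp_rw [h1]
      rw [← Finset.mul_sum, orth_parseval U hU]
    have h2t : ((2:ENNReal)).toReal = (2:ℝ) := by norm_num
    have hx2 : Summable fun k : Fin d → ℤ => ∑ n, (x k n) ^ 2 := by
      have := (lp.memℓp x).summable (p := 2) (by norm_num)
      simp_rw [h2t, hxn] at this
      exact this
    have hxs : ∀ i : Fin p, Summable (fun k : Fin d → ℤ => ∑ n, (x (k - κ i) n) ^ 2) := by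
      intro i
      have h := (Equiv.subRight (κ i)).summable_iff
        (f := fun k : Fin d → ℤ => ∑ n, (x k n) ^ 2)
      exact h.mpr hx2
    have hsum : Summable fun k => ∑ r, (v k r) ^ 2 := by
      simp_rw [hB, Fintype.sum_prod_type]
      exact (summable_sum (fun i _ => hxs i)).mul_left _
    have hmem : Memℓp v 2 := by
      refine memℓp_gen ?_
      simp_rw [h2t, hvn]
      exact hsum
    refine ⟨⟨v, hmem⟩, fun k r => ?_, ?_⟩
    · show v k r = _
      have hterm : ∀ m : Fin d → ℤ, ∑ n, H m r n * x (k - m) n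
          = ∑ i : Fin p, if m = κ i then
              ((Real.sqrt p)⁻¹ * ∑ n, U r (i, n) * x (k - m) n) else 0 := by
        intro m
        have h1 : ∀ n, H m r n * x (k - m) n
            = ∑ i : Fin p, (if m = κ i then (Real.sqrt p)⁻¹ * (U r (i, n) * x (k - m) n) else 0) := by
          intro n
          rw [hH, mul_assoc, Finset.sum_mul, Finset.mul_sum]
          refine Finset.sum_congr rfl fun i _ => ?_
          split_ifs with h <;> ring
        simp_rw [h1]
        rw [Finset.sum_comm]
        refine Finset.sum_congr rfl fun i _ => ?_
        split_ifs with h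
        · rw [Finset.mul_sum]
        · simp
      simp_rw [hterm]
      rw [tsum_ite_kappa κ (fun i m => (Real.sqrt p)⁻¹ * ∑ n, U r (i, n) * x (k - m) n)]
      show (Real.sqrt p)⁻¹ * _ = _
      rw [Fintype.sum_prod_type, Finset.mul_sum]
    · have h2 : (0:ℝ) < ((2:ENNReal)).toReal := by norm_num
      have hu := lp.norm_rpow_eq_tsum h2
        (⟨v, hmem⟩ : lp (fun _ : Fin d → ℤ => EuclideanSpace ℝ (Fin p × Fin N)) 2)
      have hx' := lp.norm_rpow_eq_tsum h2 x
      have key : ∑' k : Fin d → ℤ, ‖v k‖ ^ ((2:ENNReal)).toReal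
          = ∑' k : Fin d → ℤ, ‖x k‖ ^ ((2:ENNReal)).toReal := by
        calc ∑' k : Fin d → ℤ, ‖v k‖ ^ ((2:ENNReal)).toReal
            = ∑' k : Fin d → ℤ, (p:ℝ)⁻¹ * ∑ i : Fin p, ∑ n, (x (k - κ i) n) ^ 2 := by
              simp_rw [h2t, hvn, hB, Fintype.sum_prod_type]
          _ = (p:ℝ)⁻¹ * ∑' k : Fin d → ℤ, ∑ i : Fin p, ∑ n, (x (k - κ i) n) ^ 2 := tsum_mul_left
          _ = (p:ℝ)⁻¹ * ∑ i : Fin p, ∑' k : Fin d → ℤ, ∑ n, (x (k - κ i) n) ^ 2 := by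
              rw [Summable.tsum_finsetSum (fun i _ => hxs i)]
          _ = (p:ℝ)⁻¹ * ∑ _i : Fin p, ∑' k : Fin d → ℤ, ∑ n, (x k n) ^ 2 := by
              congr 1
              refine Finset.sum_congr rfl fun i _ => ?_
              have h := (Equiv.subRight (κ i)).tsum_eq
                (f := fun k : Fin d → ℤ => ∑ n, (x k n) ^ 2)
              exact h
          _ = ∑' k : Fin d → ℤ, ∑ n, (x k n) ^ 2 := by
              rw [Finset.sum_const, Finset.card_univ, Fintype.card_fin, nsmul_eq_mul,
                ← mul_assoc, inv_mul_cancel₀ (by positivity), one_mul]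
          _ = ∑' k : Fin d → ℤ, ‖x k‖ ^ ((2:ENNReal)).toReal := by simp_rw [h2t, hxn]
      have hcoe : ∀ k : Fin d → ℤ,
          ((⟨v, hmem⟩ : lp (fun _ : Fin d → ℤ => EuclideanSpace ℝ (Fin p × Fin N)) 2) :
            ∀ k : Fin d → ℤ, EuclideanSpace ℝ (Fin p × Fin N)) k = v k := fun _ => rfl
      rw [show (fun k : Fin d → ℤ =>
          ‖((⟨v, hmem⟩ : lp (fun _ : Fin d → ℤ => EuclideanSpace ℝ (Fin p × Fin N)) 2) :
            ∀ k : Fin d → ℤ, EuclideanSpace ℝ (Fin p × Fin N)) k‖ ^ ((2:ENNReal)).toReal)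
          = fun k : Fin d → ℤ => ‖v k‖ ^ ((2:ENNReal)).toReal from rfl] at hu
      rw [key, ← hx'] at hu
      have hnn : (0:ℝ) ≤ ‖x‖ := norm_nonneg x
      have hnn' : (0:ℝ) ≤ ‖(⟨v, hmem⟩ : lp (fun _ : Fin d → ℤ => EuclideanSpace ℝ (Fin p × Fin N)) 2)‖ :=
        norm_nonneg _
      rw [h2t] at hu
      have hsq : ‖(⟨v, hmem⟩ : lp (fun _ : Fin d → ℤ => EuclideanSpace ℝ (Fin p × Fin N)) 2)‖ ^ (2:ℕ)
          = ‖x‖ ^ (2:ℕ) := by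
        have e1 : ∀ a : ℝ, a ^ (2:ℝ) = a ^ (2:ℕ) := fun a => by
          rw [← Real.rpow_natCast a 2]; norm_num
        rw [← e1, ← e1, hu]
      calc ‖(⟨v, hmem⟩ : lp (fun _ : Fin d → ℤ => EuclideanSpace ℝ (Fin p × Fin N)) 2)‖
          = Real.sqrt (‖(⟨v, hmem⟩ : lp (fun _ : Fin d → ℤ => EuclideanSpace ℝ (Fin p × Fin N)) 2)‖ ^ 2) :=
            (Real.sqrt_sq hnn').symm
        _ = Real.sqrt (‖x‖ ^ 2) := by rw [hsq]
        _ = ‖x‖ := Real.sqrt_sq hnn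
end

section
/- Let d, N be positive integers, let U = [u₁ ⋯ u_N] and V = [v₁ ⋯ v_N] be orthogonal matrices in ℝ^{N×N} with columns u_n, v_n, and let k₁, …, k_N ∈ ℤ^d (not necessarily distinct). Define the matrix-valued filter H : ℤ^d → ℝ^{N×N} by H[·] = ∑_{n=1}^{N} u_n v_nᵀ δ[·−k_n]. Then (H^{T∨} ∗ H)[k] = I_N δ[k] for all k ∈ ℤ^d, and consequently the convolution operator T_H : ℓ₂^N(ℤ^d) → ℓ₂^N(ℤ^d), x ↦ H ∗ x, is an isometry (a Parseval N-to-N filter). -/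
set_option maxHeartbeats 1000000

open Matrix

lemma orth_sum {N : ℕ} (U : Matrix (Fin N) (Fin N) ℝ) (hU : Uᵀ * U = 1)
    (c : Fin N → ℝ) : ∑ i, (∑ p, U i p * c p) ^ 2 = ∑ p, (c p) ^ 2 := by
  have hUc : ∀ p q, ∑ i, U i p * U i q = if p = q then (1:ℝ) else 0 := by
    intro p q
    have := congrArg (fun M => M p q) hU
    simpa [Matrix.mul_apply, Matrix.transpose_apply, Matrix.one_apply] using this
  calc ∑ i, (∑ p, U i p * c p) ^ 2
      = ∑ i, ∑ p, ∑ q, (U i p * c p) * (U i q * c q) := by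
        simp [sq, Finset.sum_mul_sum]
    _ = ∑ p, ∑ q, (c p * c q) * ∑ i, U i p * U i q := by
        rw [Finset.sum_comm]
        refine Finset.sum_congr rfl fun p _ => ?_
        rw [Finset.sum_comm]
        refine Finset.sum_congr rfl fun q _ => ?_
        rw [Finset.mul_sum]
        exact Finset.sum_congr rfl fun i _ => by ring
    _ = ∑ p, (c p) ^ 2 := by
        refine Finset.sum_congr rfl fun p _ => ?_
        simp [hUc, mul_ite, Finset.sum_ite_eq', sq]

/-- Let `U = [u₁ ⋯ u_N]` and `V = [v₁ ⋯ v_N]` be orthogonal matrices in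
`ℝ^{N×N}` and `k₁, …, k_N ∈ ℤ^d` (not necessarily distinct). Define
`H[·] = ∑_n u_n v_nᵀ δ[·−k_n]`. Then `(H^{T∨} ∗ H)[k] = I_N δ[k]` for all `k`, and
consequently `T_H : ℓ₂^N(ℤ^d) → ℓ₂^N(ℤ^d)`, `x ↦ H ∗ x`, is an isometry (a Parseval
N-to-N filter). -/
theorem parseval_N_to_N_module
    (d N : ℕ) (hd : 0 < d) (hN : 0 < N)
    (U V : Matrix (Fin N) (Fin N) ℝ)
    (hU : Uᵀ * U = 1) (hV : Vᵀ * V = 1)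
    (κ : Fin N → (Fin d → ℤ))
    (H : (Fin d → ℤ) → Matrix (Fin N) (Fin N) ℝ)
    (hH : ∀ (k : Fin d → ℤ) (i j : Fin N),
      H k i j = ∑ n : Fin N, if k = κ n then U i n * V j n else 0) :
    (∀ (k : Fin d → ℤ) (n n' : Fin N),
      ∑' m : Fin d → ℤ, ((H m)ᵀ * H (m + k)) n n' =
        if k = 0 then (1 : Matrix (Fin N) (Fin N) ℝ) n n' else 0) ∧
    (∀ x : lp (fun _ : Fin d → ℤ => EuclideanSpace ℝ (Fin N)) 2,
      ∃ u : lp (fun _ : Fin d → ℤ => EuclideanSpace ℝ (Fin N)) 2,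
        (∀ (k : Fin d → ℤ) (i : Fin N),
          u k i = ∑' m : Fin d → ℤ, ∑ n : Fin N, H m i n * x (k - m) n) ∧
        ‖u‖ = ‖x‖) := by
  constructor
  · intro k n n'
    have hUc : ∀ p q, ∑ i, U i p * U i q = if p = q then (1:ℝ) else 0 := by
      intro p q
      have := congrArg (fun M => M p q) hU
      simpa [Matrix.mul_apply, Matrix.transpose_apply, Matrix.one_apply] using this
    have key : ∀ m, ((H m)ᵀ * H (m + k)) n n' =
        ∑ p : Fin N, if m = κ p then (if k = 0 then V n p * V n' p else 0) else 0 := by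
      intro m
      rw [Matrix.mul_apply]
      simp only [Matrix.transpose_apply, hH]
      calc ∑ i, (∑ p, if m = κ p then U i p * V n p else 0) *
              (∑ q, if m + k = κ q then U i q * V n' q else 0)
          = ∑ i, ∑ p, ∑ q, (if m = κ p then U i p * V n p else 0) *
              (if m + k = κ q then U i q * V n' q else 0) := by
            simp [Finset.sum_mul_sum]
        _ = ∑ p, ∑ q, ∑ i, (if m = κ p then U i p * V n p else 0) *
              (if m + k = κ q then U i q * V n' q else 0) := by
            rw [Finset.sum_comm]
            exact Finset.sum_congr rfl fun p _ => Finset.sum_comm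
        _ = ∑ p, ∑ q, if q = p then (if m = κ p then (if m + k = κ p then V n p * V n' p else 0) else 0) else 0 := by
            refine Finset.sum_congr rfl fun p _ => Finset.sum_congr rfl fun q _ => ?_
            have hsum : (∑ i, (if m = κ p then U i p * V n p else 0) *
                (if m + k = κ q then U i q * V n' q else 0)) =
                if m = κ p then (if m + k = κ q then
                  (if p = q then (1:ℝ) else 0) * (V n p * V n' q) else 0) else 0 := by
              by_cases h1 : m = κ p
              · by_cases h2 : m + k = κ q
                · simp only [if_pos h1, if_pos h2]
                  rw [← hUc p q, Finset.sum_mul]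
                  exact Finset.sum_congr rfl fun i _ => by ring
                · simp only [if_pos h1, if_neg h2, mul_zero, Finset.sum_const_zero]
              · simp only [if_neg h1, zero_mul, Finset.sum_const_zero]
            rw [hsum]
            by_cases h3 : q = p
            · subst h3
              simp
            · have h3' : ¬ p = q := fun h => h3 h.symm
              simp [h3, h3']
        _ = ∑ p : Fin N, if m = κ p then (if k = 0 then V n p * V n' p else 0) else 0 := by
            refine Finset.sum_congr rfl fun p _ => ?_
            rw [Finset.sum_ite_eq' Finset.univ p]
            simp only [Finset.mem_univ, if_true]
            by_cases h1 : m = κ p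
            · subst h1
              simp [add_eq_left]
            · simp [h1]
    rw [tsum_congr key]
    rw [Summable.tsum_finsetSum (fun p _ => (hasSum_ite_eq (κ p) _).summable)]
    simp only [tsum_ite_eq]
    by_cases hk : k = 0
    · subst hk
      have hVV : V * Vᵀ = 1 := mul_eq_one_comm.mp hV
      have := congrArg (fun M => M n n') hVV
      simp [Matrix.mul_apply, Matrix.transpose_apply] at this
      simp [this]
    · simp [hk]
  · intro x
    classical
    set c' : Fin N → (Fin d → ℤ) → ℝ := fun p k => ∑ n, V n p * x k n with hc'
    have hVV : V * Vᵀ = 1 := mul_eq_one_comm.mp hV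
    have hPar : ∀ k, ∑ p, (c' p k) ^ 2 = ∑ n, (x k n) ^ 2 := by
      intro k
      have := orth_sum Vᵀ (by rwa [Matrix.transpose_transpose]) (fun n => x k n)
      simpa [Matrix.transpose_apply, hc'] using this
    have hxnorm : ∀ k, ‖x k‖ ^ 2 = ∑ n, (x k n) ^ 2 := by
      intro k
      rw [EuclideanSpace.norm_eq, Real.sq_sqrt (Finset.sum_nonneg fun n _ => sq_nonneg _)]
      exact Finset.sum_congr rfl fun n _ => by rw [Real.norm_eq_abs, sq_abs]
    have hxsum : Summable fun k => ∑ n, (x k n) ^ 2 := by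
      have h := (lp.memℓp x).summable (by norm_num : 0 < (2 : ENNReal).toReal)
      have : Summable fun k => ‖x k‖ ^ 2 := by
        refine h.congr fun k => ?_
        rw [show ((2:ENNReal).toReal) = (2:ℝ) by norm_num, Real.rpow_two]
      exact this.congr fun k => hxnorm k
    have hS' : ∀ p, Summable fun k => (c' p k) ^ 2 := by
      intro p
      have hle : ∀ k, (c' p k) ^ 2 ≤ ∑ n, (x k n : ℝ) ^ 2 := by
        intro k
        rw [← hPar k]
        exact Finset.single_le_sum (f := fun q => (c' q k) ^ 2)
          (fun q _ => sq_nonneg _) (Finset.mem_univ p)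
      exact Summable.of_nonneg_of_le (fun k => sq_nonneg _) hle hxsum
    have hS : ∀ p, Summable fun k => (c' p (k - κ p)) ^ 2 := by
      intro p
      have := ((Equiv.subRight (κ p)).summable_iff
        (f := fun k => (c' p k) ^ 2)).mpr (hS' p)
      simpa [Function.comp_def, Equiv.subRight_apply] using this
    have hts : ∀ p, ∑' k, (c' p (k - κ p)) ^ 2 = ∑' k, (c' p k) ^ 2 := by
      intro p
      have := (Equiv.subRight (κ p)).tsum_eq (fun k => (c' p k) ^ 2)
      simpa [Equiv.subRight_apply] using this
    set F : (Fin d → ℤ) → EuclideanSpace ℝ (Fin N) :=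
      fun k => WithLp.toLp 2 (fun i => ∑ p, U i p * c' p (k - κ p)) with hF
    have hFnorm : ∀ k, ‖F k‖ ^ 2 = ∑ p, (c' p (k - κ p)) ^ 2 := by
      intro k
      rw [EuclideanSpace.norm_eq, Real.sq_sqrt (Finset.sum_nonneg fun n _ => sq_nonneg _)]
      have : ∀ i, ‖F k i‖ ^ 2 = (∑ p, U i p * c' p (k - κ p)) ^ 2 := by
        intro i; rw [Real.norm_eq_abs, sq_abs]
      rw [Finset.sum_congr rfl fun i _ => this i]
      exact orth_sum U hU _
    have hFsum : Summable fun k => ‖F k‖ ^ 2 := by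
      have : Summable fun k => ∑ p, (c' p (k - κ p)) ^ 2 :=
        summable_sum fun p _ => hS p
      exact this.congr fun k => (hFnorm k).symm
    have hmem : Memℓp F 2 := by
      apply memℓp_gen
      refine hFsum.congr fun k => ?_
      rw [show ((2:ENNReal).toReal) = (2:ℝ) by norm_num, Real.rpow_two]
    refine ⟨⟨F, hmem⟩, ?_, ?_⟩
    · intro k i
      have hform : ∀ m, (∑ n, H m i n * x (k - m) n) =
          ∑ p, if m = κ p then U i p * c' p (k - κ p) else 0 := by
        intro m
        simp only [hH, Finset.sum_mul]
        rw [Finset.sum_comm]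
        refine Finset.sum_congr rfl fun p _ => ?_
        by_cases h1 : m = κ p
        · subst h1
          simp [hc', Finset.mul_sum, mul_assoc]
        · simp [h1]
      rw [tsum_congr hform, Summable.tsum_finsetSum (fun p _ => (hasSum_ite_eq (κ p) _).summable)]
      simp only [tsum_ite_eq]
      rfl
    · have hpt : 0 < (2:ENNReal).toReal := by norm_num
      rw [lp.norm_eq_tsum_rpow hpt, lp.norm_eq_tsum_rpow hpt]
      congr 1
      have h2 : ∀ y : ℝ, y ^ ((2:ENNReal).toReal) = y ^ 2 := fun y => by
        rw [show ((2:ENNReal).toReal) = (2:ℝ) by norm_num, Real.rpow_two]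
      calc ∑' k, ‖(⟨F, hmem⟩ : lp (fun _ : Fin d → ℤ => EuclideanSpace ℝ (Fin N)) 2) k‖ ^ ((2:ENNReal).toReal)
          = ∑' k, ∑ p, (c' p (k - κ p)) ^ 2 := by
            exact tsum_congr fun k => by rw [h2]; exact hFnorm k
        _ = ∑ p, ∑' k, (c' p (k - κ p)) ^ 2 := Summable.tsum_finsetSum fun p _ => hS p
        _ = ∑ p, ∑' k, (c' p k) ^ 2 := Finset.sum_congr rfl fun p _ => hts p
        _ = ∑' k, ∑ p, (c' p k) ^ 2 := (Summable.tsum_finsetSum fun p _ => hS' p).symm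
        _ = ∑' k, ‖x k‖ ^ ((2:ENNReal).toReal) := by
            exact tsum_congr fun k => by rw [h2, hxnorm, hPar]
end

section
/- Let d, N be positive integers, let P ∈ ℝ^{N×N} be an orthogonal projection matrix (P² = P and Pᵀ = P), and let k₁ ∈ ℤ^d. Define the matrix-valued filter H : ℤ^d → ℝ^{N×N} by H[·] = (I_N − P) δ[·] + P δ[·−k₁]. Then (H^{T∨} ∗ H)[k] = I_N δ[k] for all k ∈ ℤ^d, and consequently the convolution operator T_H : ℓ₂^N(ℤ^d) → ℓ₂^N(ℤ^d), x ↦ H ∗ x, is an isometry (a Parseval projection-based filter). -/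
open Matrix ENNReal

noncomputable def ev {N : ℕ} (f : Fin N → ℝ) : EuclideanSpace ℝ (Fin N) := WithLp.toLp 2 f

section helpers
variable {N : ℕ} (P : Matrix (Fin N) (Fin N) ℝ)

lemma inner_zero' (hP_idem : P * P = P) (hP_symm : Pᵀ = P) (v w : EuclideanSpace ℝ (Fin N)) :
    inner ℝ (ev (((1:Matrix (Fin N) (Fin N) ℝ)-P).mulVec v)) (ev (P.mulVec w)) = (0:ℝ) := by
  have h0 : ((1:Matrix (Fin N) (Fin N) ℝ)-P)ᵀ * P = 0 := by
    rw [Matrix.transpose_sub, Matrix.transpose_one, hP_symm, Matrix.sub_mul, Matrix.one_mul,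
      hP_idem, sub_self]
  have : (inner ℝ (ev (((1:Matrix (Fin N) (Fin N) ℝ)-P).mulVec v)) (ev (P.mulVec w)) : ℝ)
      = (((1:Matrix (Fin N) (Fin N) ℝ)-P).mulVec v) ⬝ᵥ (P.mulVec w) := by
    simp [PiLp.inner_apply, dotProduct, RCLike.inner_apply, ev, mul_comm]
  rw [this, ← Matrix.vecMul_transpose, Matrix.dotProduct_mulVec, Matrix.vecMul_vecMul,
    h0, Matrix.vecMul_zero, zero_dotProduct]

lemma pyth (hP_idem : P * P = P) (hP_symm : Pᵀ = P) (v w : EuclideanSpace ℝ (Fin N)) :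
    ‖ev (((1:Matrix (Fin N) (Fin N) ℝ)-P).mulVec v) + ev (P.mulVec w)‖^2
      = ‖ev (((1:Matrix (Fin N) (Fin N) ℝ)-P).mulVec v)‖^2 + ‖ev (P.mulVec w)‖^2 := by
  rw [norm_add_sq_real, inner_zero' P hP_idem hP_symm]; ring

lemma decomp (hP_idem : P * P = P) (hP_symm : Pᵀ = P) (v : EuclideanSpace ℝ (Fin N)) :
    ‖ev (((1:Matrix (Fin N) (Fin N) ℝ)-P).mulVec v)‖^2 + ‖ev (P.mulVec v)‖^2 = ‖v‖^2 := by
  rw [← pyth P hP_idem hP_symm]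
  have : ev (((1:Matrix (Fin N) (Fin N) ℝ)-P).mulVec v) + ev (P.mulVec v) = v := by
    simp only [ev]
    rw [← WithLp.toLp_add, ← Matrix.add_mulVec, sub_add_cancel, Matrix.one_mulVec,
      WithLp.toLp_ofLp]
  rw [this]
end helpers

set_option maxHeartbeats 1000000 in
/-- Let `P ∈ ℝ^{N×N}` be an orthogonal projection matrix (`P² = P`,
`Pᵀ = P`) and `k₁ ∈ ℤ^d`. Define `H[·] = (I_N − P) δ[·] + P δ[·−k₁]`. Then
`(H^{T∨} ∗ H)[k] = I_N δ[k]` for all `k`, and consequently the convolution operator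
`T_H : ℓ₂^N(ℤ^d) → ℓ₂^N(ℤ^d)` is an isometry (a Parseval projection-based filter). -/
theorem parseval_projection_module
    (d N : ℕ) (hd : 0 < d) (hN : 0 < N)
    (P : Matrix (Fin N) (Fin N) ℝ)
    (hP_idem : P * P = P) (hP_symm : Pᵀ = P)
    (k₁ : Fin d → ℤ)
    (H : (Fin d → ℤ) → Matrix (Fin N) (Fin N) ℝ)
    (hH : ∀ k : Fin d → ℤ,
      H k = (if k = 0 then (1 : Matrix (Fin N) (Fin N) ℝ) - P else 0) +
        (if k = k₁ then P else 0)) :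
    (∀ (k : Fin d → ℤ) (n n' : Fin N),
      ∑' m : Fin d → ℤ, ((H m)ᵀ * H (m + k)) n n' =
        if k = 0 then (1 : Matrix (Fin N) (Fin N) ℝ) n n' else 0) ∧
    (∀ x : lp (fun _ : Fin d → ℤ => EuclideanSpace ℝ (Fin N)) 2,
      ∃ u : lp (fun _ : Fin d → ℤ => EuclideanSpace ℝ (Fin N)) 2,
        (∀ (k : Fin d → ℤ) (i : Fin N),
          u k i = ∑' m : Fin d → ℤ, ∑ n : Fin N, H m i n * x (k - m) n) ∧
        ‖u‖ = ‖x‖) := by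
  have hBA : P * ((1 : Matrix (Fin N) (Fin N) ℝ) - P) = 0 := by
    rw [Matrix.mul_sub, Matrix.mul_one, hP_idem, sub_self]
  have hAB : ((1 : Matrix (Fin N) (Fin N) ℝ) - P) * P = 0 := by
    rw [Matrix.sub_mul, Matrix.one_mul, hP_idem, sub_self]
  have hAA : ((1:Matrix (Fin N) (Fin N) ℝ) - P) * ((1:Matrix (Fin N) (Fin N) ℝ) - P)
      = (1:Matrix (Fin N) (Fin N) ℝ) - P := by
    rw [Matrix.mul_sub, Matrix.mul_one, hAB, sub_zero]
  have hprod : ∀ m k : Fin d → ℤ,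
      (H m)ᵀ * H (m + k) = (if m = 0 ∧ k = 0 then (1:Matrix (Fin N) (Fin N) ℝ) - P else 0) +
        (if m = k₁ ∧ k = 0 then P else 0) := by
    intro m k
    rw [hH m, hH (m + k)]
    simp only [Matrix.transpose_add, apply_ite Matrix.transpose, Matrix.transpose_sub,
      Matrix.transpose_one, hP_symm, Matrix.transpose_zero, Matrix.add_mul, Matrix.mul_add]
    by_cases hm0 : m = 0 <;> by_cases hk : k = 0 <;> by_cases hmk : m = k₁ <;>
      subst_vars <;>
      simp_all [hAA, hAB, hBA, hP_idem, zero_add, add_zero]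
  constructor
  · intro k n n'
    by_cases hk : k = 0
    · subst hk
      simp only [hprod, and_true, Matrix.add_apply,
        apply_ite (fun M : Matrix (Fin N) (Fin N) ℝ => M n n'), Matrix.zero_apply, if_pos rfl]
      rw [Summable.tsum_add (hasSum_ite_eq 0 _).summable (hasSum_ite_eq k₁ _).summable,
        tsum_ite_eq, tsum_ite_eq, Matrix.sub_apply, Matrix.one_apply]
      by_cases h : n = n' <;> simp [h]
    · simp [hprod, hk]
  · intro x
    have htwo : ((2:ℝ≥0∞)).toReal = (2:ℝ) := by norm_num
    have hrp : ∀ r : ℝ, r ^ ((2:ℝ≥0∞)).toReal = r ^ 2 := by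
      intro r
      rw [htwo, ← Real.rpow_natCast r 2]
      norm_num
    have hx2 : Summable (fun k : Fin d → ℤ => ‖x k‖ ^ 2) := by
      have hm := lp.memℓp x
      rw [memℓp_gen_iff (by norm_num : 0 < ((2:ℝ≥0∞)).toReal)] at hm
      simpa [hrp] using hm
    -- pointwise bounds
    have hbP : ∀ v : EuclideanSpace ℝ (Fin N), ‖ev (P.mulVec v)‖ ^ 2 ≤ ‖v‖ ^ 2 := by
      intro v
      nlinarith [decomp P hP_idem hP_symm v, sq_nonneg ‖ev (P.mulVec v)‖,
        sq_nonneg ‖ev (((1:Matrix (Fin N) (Fin N) ℝ) - P).mulVec v)‖]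
    have hbA : ∀ v : EuclideanSpace ℝ (Fin N),
        ‖ev ((((1:Matrix (Fin N) (Fin N) ℝ) - P)).mulVec v)‖ ^ 2 ≤ ‖v‖ ^ 2 := by
      intro v
      nlinarith [decomp P hP_idem hP_symm v, sq_nonneg ‖ev (P.mulVec v)‖,
        sq_nonneg ‖ev (((1:Matrix (Fin N) (Fin N) ℝ) - P).mulVec v)‖]
    set A : Matrix (Fin N) (Fin N) ℝ := (1:Matrix (Fin N) (Fin N) ℝ) - P with hAdef
    set v : ∀ _ : Fin d → ℤ, EuclideanSpace ℝ (Fin N) :=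
      fun k => ev (A.mulVec (x k)) + ev (P.mulVec (x (k - k₁))) with hv
    have hvnorm : ∀ k, ‖v k‖ ^ 2 = ‖ev (A.mulVec (x k))‖ ^ 2 + ‖ev (P.mulVec (x (k - k₁)))‖ ^ 2 :=
      fun k => pyth P hP_idem hP_symm (x k) (x (k - k₁))
    have hsa : Summable (fun k : Fin d → ℤ => ‖ev (A.mulVec (x k))‖ ^ 2) := by
      apply Summable.of_nonneg_of_le (fun k => sq_nonneg _) (fun k => hbA (x k)) hx2
    have hx2' : Summable (fun k : Fin d → ℤ => ‖x (k - k₁)‖ ^ 2) := by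
      have h := hx2.comp_injective (sub_left_injective (b := k₁))
      exact h
    have hsb : Summable (fun k : Fin d → ℤ => ‖ev (P.mulVec (x (k - k₁)))‖ ^ 2) := by
      apply Summable.of_nonneg_of_le (fun k => sq_nonneg _)
        (fun k => hbP (x (k - k₁))) hx2'
    have hvsum : Summable (fun k => ‖v k‖ ^ 2) := by
      simpa [hvnorm] using hsa.add hsb
    have hmem : Memℓp v 2 := by
      rw [memℓp_gen_iff (by norm_num : 0 < ((2:ℝ≥0∞)).toReal)]
      simpa [hrp] using hvsum
    refine ⟨⟨v, hmem⟩, ?_, ?_⟩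
    · intro k i
      have hfun : (fun m : Fin d → ℤ => ∑ n : Fin N, H m i n * x (k - m) n) =
          (fun m => (if m = 0 then A.mulVec (x k) i else 0)
            + (if m = k₁ then P.mulVec (x (k - k₁)) i else 0)) := by
        funext m
        rw [hH m]
        by_cases hm0 : m = 0 <;> by_cases hmk : m = k₁ <;>
          subst_vars <;>
          simp_all [Matrix.mulVec, dotProduct, Finset.sum_add_distrib, Matrix.add_apply,
            Matrix.sub_apply, Matrix.one_apply, add_mul, sub_mul]
      show v k i = _
      rw [hfun, Summable.tsum_add (hasSum_ite_eq 0 _).summable (hasSum_ite_eq k₁ _).summable,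
        tsum_ite_eq, tsum_ite_eq]
      rfl
    · have h1 : ‖(⟨v, hmem⟩ : lp (fun _ : Fin d → ℤ => EuclideanSpace ℝ (Fin N)) 2)‖ ^ 2
          = ∑' k, ‖v k‖ ^ 2 := by
        have := lp.norm_rpow_eq_tsum (p := 2)
          (by norm_num : 0 < ((2:ℝ≥0∞)).toReal)
          (⟨v, hmem⟩ : lp (fun _ : Fin d → ℤ => EuclideanSpace ℝ (Fin N)) 2)
        simpa [hrp] using this
      have h2 : ‖x‖ ^ 2 = ∑' k, ‖x k‖ ^ 2 := by
        have := lp.norm_rpow_eq_tsum (p := 2)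
          (by norm_num : 0 < ((2:ℝ≥0∞)).toReal) x
        simpa [hrp] using this
      have h3 : ∑' k, ‖v k‖ ^ 2 = ∑' k : Fin d → ℤ, ‖x k‖ ^ 2 := by
        calc ∑' k, ‖v k‖ ^ 2
            = ∑' k : Fin d → ℤ, (‖ev (A.mulVec (x k))‖ ^ 2 + ‖ev (P.mulVec (x (k - k₁)))‖ ^ 2) := by
              simp [hvnorm]
          _ = (∑' k : Fin d → ℤ, ‖ev (A.mulVec (x k))‖ ^ 2)
              + ∑' k : Fin d → ℤ, ‖ev (P.mulVec (x (k - k₁)))‖ ^ 2 := Summable.tsum_add hsa hsb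
          _ = (∑' k : Fin d → ℤ, ‖ev (A.mulVec (x k))‖ ^ 2)
              + ∑' k : Fin d → ℤ, ‖ev (P.mulVec (x k))‖ ^ 2 := by
              congr 1
              exact ((Equiv.subRight k₁).tsum_eq (fun k => ‖ev (P.mulVec (x k))‖ ^ 2))
          _ = ∑' k : Fin d → ℤ, (‖ev (A.mulVec (x k))‖ ^ 2 + ‖ev (P.mulVec (x k))‖ ^ 2) := by
              refine (Summable.tsum_add hsa ?_).symm
              exact Summable.of_nonneg_of_le (fun k => sq_nonneg _)
                (fun k => hbP (x k)) hx2
          _ = ∑' k : Fin d → ℤ, ‖x k‖ ^ 2 := by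
              congr 1
              funext k
              exact decomp P hP_idem hP_symm (x k)
      have := h1.trans (h3.trans h2.symm)
      exact (sq_eq_sq₀ (norm_nonneg _) (norm_nonneg _)).mp this
end

section
/- Let A ∈ ℝ^{M×K}, let α > 0, let R : ℝ^K → ℝ^K be 1-Lipschitz, let β ∈ (0, 1/2], and define the averaged denoiser D = βR + (1−β)Id. For measurements y₁, y₂ ∈ ℝ^M, suppose s₁*, s₂* ∈ ℝ^K are fixed points of the plug-and-play forward-backward iteration with quadratic data term J(y, As) = (1/2)‖y − As‖₂², i.e. sᵢ* = D{sᵢ* − α Aᵀ(A sᵢ* − yᵢ)} for i = 1, 2. Then ‖A s₁* − A s₂*‖ ≤ ‖y₁ − y₂‖. -/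
set_option maxHeartbeats 1000000


open Matrix

/-- Let `A ∈ ℝ^{M×K}`, `α > 0`, `R : ℝ^K → ℝ^K` be 1-Lipschitz,
`β ∈ (0, 1/2]`, and `D = βR + (1−β)Id`. If `s₁*, s₂*` are fixed points of the PnP
forward-backward iteration `sᵢ* = D{sᵢ* − α Aᵀ(A sᵢ* − yᵢ)}` for measurements `y₁, y₂`,
then `‖A s₁* − A s₂*‖ ≤ ‖y₁ − y₂‖`. -/
theorem pnp_fbs_measurement_consistency
    (M K : ℕ) (hM : 0 < M) (hK : 0 < K)
    (A : Matrix (Fin M) (Fin K) ℝ) (α : ℝ) (hα : 0 < α)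
    (R : EuclideanSpace ℝ (Fin K) → EuclideanSpace ℝ (Fin K))
    (hR : ∀ z₁ z₂ : EuclideanSpace ℝ (Fin K), ‖R z₁ - R z₂‖ ≤ ‖z₁ - z₂‖)
    (β : ℝ) (hβ₀ : 0 < β) (hβ₁ : β ≤ 1 / 2)
    (D : EuclideanSpace ℝ (Fin K) → EuclideanSpace ℝ (Fin K))
    (hD : ∀ z : EuclideanSpace ℝ (Fin K), D z = β • R z + (1 - β) • z)
    (y₁ y₂ : EuclideanSpace ℝ (Fin M))
    (s₁ s₂ : EuclideanSpace ℝ (Fin K))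
    (hs₁ : s₁ = D (s₁ - α • Matrix.toEuclideanLin Aᵀ (Matrix.toEuclideanLin A s₁ - y₁)))
    (hs₂ : s₂ = D (s₂ - α • Matrix.toEuclideanLin Aᵀ (Matrix.toEuclideanLin A s₂ - y₂))) :
    ‖Matrix.toEuclideanLin A s₁ - Matrix.toEuclideanLin A s₂‖ ≤ ‖y₁ - y₂‖ := by
  set L := Matrix.toEuclideanLin A with hL
  set Lt := Matrix.toEuclideanLin Aᵀ with hLt
  have hadj : Lt = LinearMap.adjoint L := by
    rw [hLt, hL, ← Matrix.toEuclideanLin_conjTranspose_eq_adjoint,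
      Matrix.conjTranspose_eq_transpose_of_trivial]
  set u : EuclideanSpace ℝ (Fin K) := s₁ - s₂ with hu
  set v : EuclideanSpace ℝ (Fin M) := y₁ - y₂ with hv
  set g : EuclideanSpace ℝ (Fin K) := α • Lt (L u - v) with hg
  set z₁ : EuclideanSpace ℝ (Fin K) := s₁ - α • Lt (L s₁ - y₁) with hz₁
  set z₂ : EuclideanSpace ℝ (Fin K) := s₂ - α • Lt (L s₂ - y₂) with hz₂
  have hz : z₁ - z₂ = u - g := by
    have e1 : L u - v = (L s₁ - y₁) - (L s₂ - y₂) := by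
      rw [hu, hv, map_sub]; module
    rw [hz₁, hz₂, hg, e1, map_sub Lt (L s₁ - y₁) (L s₂ - y₂), hu]
    module
  have hfix : u - (1 - β) • (u - g) = β • (R z₁ - R z₂) := by
    have h1 : s₁ = β • R z₁ + (1 - β) • z₁ := by rw [hs₁]; exact hD z₁
    have h2 : s₂ = β • R z₂ + (1 - β) • z₂ := by rw [hs₂]; exact hD z₂
    rw [← hz, hu]
    nth_rewrite 1 [h1, h2]
    module
  have hnorm : ‖u - (1 - β) • (u - g)‖ ≤ β * ‖u - g‖ := by
    rw [hfix, norm_smul, Real.norm_eq_abs, abs_of_pos hβ₀]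
    exact mul_le_mul_of_nonneg_left (hR z₁ z₂ |>.trans (le_of_eq (by rw [hz])))
      hβ₀.le
  -- square the inequality
  have hsq : ‖u - (1 - β) • (u - g)‖ ^ 2 ≤ β ^ 2 * ‖u - g‖ ^ 2 := by
    have := mul_self_le_mul_self (norm_nonneg _) hnorm
    nlinarith [norm_nonneg (u - (1 - β) • (u - g))]
  have hexp1 : ‖u - (1 - β) • (u - g)‖ ^ 2
      = ‖u‖ ^ 2 - 2 * (1 - β) * inner ℝ u (u - g) + (1 - β) ^ 2 * ‖u - g‖ ^ 2 := by
    rw [norm_sub_sq_real, real_inner_smul_right, norm_smul, Real.norm_eq_abs,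
      abs_of_nonneg (by linarith : (0:ℝ) ≤ 1 - β)]
    ring
  have hexp2 : (inner ℝ u (u - g) : ℝ) = ‖u‖ ^ 2 - inner ℝ u g := by
    rw [inner_sub_right, real_inner_self_eq_norm_sq]
  have hexp3 : ‖u - g‖ ^ 2 = ‖u‖ ^ 2 - 2 * inner ℝ u g + ‖g‖ ^ 2 := by
    rw [norm_sub_sq_real]
  have hb : (inner ℝ u g : ℝ) ≤ 0 := by
    nlinarith [sq_nonneg ‖g‖, norm_nonneg g]
  have hinner : (inner ℝ u g : ℝ) = α * (‖L u‖ ^ 2 - inner ℝ (L u) v) := by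
    rw [hg, real_inner_smul_right, hadj, LinearMap.adjoint_inner_right,
      inner_sub_right, real_inner_self_eq_norm_sq]
  have hmain : ‖L u‖ ^ 2 ≤ inner ℝ (L u) v := by nlinarith
  have hCS : (inner ℝ (L u) v : ℝ) ≤ ‖L u‖ * ‖v‖ := real_inner_le_norm _ _
  have hgoal : ‖L u‖ ≤ ‖v‖ := by
    rcases eq_or_lt_of_le (norm_nonneg (L u)) with h | h
    · rw [← h]; exact norm_nonneg v
    · nlinarith
  calc ‖L s₁ - L s₂‖ = ‖L u‖ := by rw [hu, map_sub]
    _ ≤ ‖v‖ := hgoal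
end

section
/- Let A ∈ ℝ^{M×K}, let 0 < α ≤ 2/‖AᵀA‖ (so that ‖I − αAᵀA‖ ≤ 1), and let D : ℝ^K → ℝ^K be L₀-Lipschitz with 0 < L₀ < 1. For measurements y₁, y₂ ∈ ℝ^M, suppose s₁*, s₂* ∈ ℝ^K are fixed points of the plug-and-play forward-backward iteration with quadratic data term, i.e. sᵢ* = D{sᵢ* − α Aᵀ(A sᵢ* − yᵢ)} for i = 1, 2. Then ‖s₁* − s₂*‖ ≤ (α ‖A‖ L₀ / (1 − L₀)) ‖y₁ − y₂‖, where ‖A‖ denotes the spectral (operator) norm of A. -/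
set_option maxHeartbeats 1000000


open Matrix

/-- The spectral (operator) norm of a real matrix with respect to the Euclidean norms. -/
noncomputable def matrixOpNorm {M K : ℕ} (A : Matrix (Fin M) (Fin K) ℝ) : ℝ :=
  ‖LinearMap.toContinuousLinearMap (Matrix.toEuclideanLin A)‖

/-- Let `A ∈ ℝ^{M×K}`, `0 < α ≤ 2/‖AᵀA‖`, and let `D : ℝ^K → ℝ^K` be
`L₀`-Lipschitz with `0 < L₀ < 1`. If `s₁*, s₂*` are fixed points of the PnP
forward-backward iteration `sᵢ* = D{sᵢ* − α Aᵀ(A sᵢ* − yᵢ)}` for measurements `y₁, y₂`,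
then `‖s₁* − s₂*‖ ≤ (α ‖A‖ L₀ / (1 − L₀)) ‖y₁ − y₂‖`. -/
theorem pnp_fbs_stability
    (M K : ℕ) (hM : 0 < M) (hK : 0 < K)
    (A : Matrix (Fin M) (Fin K) ℝ) (α : ℝ) (hα₀ : 0 < α)
    (hα₂ : α ≤ 2 / matrixOpNorm (Aᵀ * A))
    (L₀ : ℝ) (hL₀ : 0 < L₀) (hL₁ : L₀ < 1)
    (D : EuclideanSpace ℝ (Fin K) → EuclideanSpace ℝ (Fin K))
    (hD : ∀ z₁ z₂ : EuclideanSpace ℝ (Fin K), ‖D z₁ - D z₂‖ ≤ L₀ * ‖z₁ - z₂‖)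
    (y₁ y₂ : EuclideanSpace ℝ (Fin M))
    (s₁ s₂ : EuclideanSpace ℝ (Fin K))
    (hs₁ : s₁ = D (s₁ - α • Matrix.toEuclideanLin Aᵀ (Matrix.toEuclideanLin A s₁ - y₁)))
    (hs₂ : s₂ = D (s₂ - α • Matrix.toEuclideanLin Aᵀ (Matrix.toEuclideanLin A s₂ - y₂))) :
    ‖s₁ - s₂‖ ≤ (α * matrixOpNorm A * L₀ / (1 - L₀)) * ‖y₁ - y₂‖ := by
  set B : EuclideanSpace ℝ (Fin K) →L[ℝ] EuclideanSpace ℝ (Fin M) :=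
    LinearMap.toContinuousLinearMap (Matrix.toEuclideanLin A) with hB
  set Bt : EuclideanSpace ℝ (Fin M) →L[ℝ] EuclideanSpace ℝ (Fin K) :=
    LinearMap.toContinuousLinearMap (Matrix.toEuclideanLin Aᵀ) with hBt
  have hadj : Bt = ContinuousLinearMap.adjoint B := by
    rw [hBt, hB, show Aᵀ = Aᴴ from (Matrix.conjTranspose_eq_transpose_of_trivial A).symm,
      Matrix.toEuclideanLin_conjTranspose_eq_adjoint,
      LinearMap.adjoint_toContinuousLinearMap]
  have hnormBt : ‖Bt‖ = ‖B‖ := by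
    rw [hadj]; exact ContinuousLinearMap.adjoint.norm_map B
  have hinner : ∀ (u : EuclideanSpace ℝ (Fin M)) (v : EuclideanSpace ℝ (Fin K)),
      inner ℝ (Bt u) v = (inner ℝ u (B v) : ℝ) := by
    intro u v
    rw [hadj]
    exact ContinuousLinearMap.adjoint_inner_left B v u
  -- ‖B‖² ≤ ‖AᵀA‖
  have hTapp : ∀ x : EuclideanSpace ℝ (Fin K),
      LinearMap.toContinuousLinearMap (Matrix.toEuclideanLin (Aᵀ * A)) x = Bt (B x) := by
    intro x
    show Matrix.toEuclideanLin (Aᵀ * A) x = Matrix.toEuclideanLin Aᵀ (Matrix.toEuclideanLin A x)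
    simp [Matrix.toEuclideanLin_apply, Matrix.mulVec_mulVec]
  have hBsq : ‖B‖ ^ 2 ≤ matrixOpNorm (Aᵀ * A) := by
    have h1 : ∀ x : EuclideanSpace ℝ (Fin K),
        ‖B x‖ ^ 2 ≤ matrixOpNorm (Aᵀ * A) * ‖x‖ ^ 2 := by
      intro x
      have : (‖B x‖ : ℝ) ^ 2 = inner ℝ (Bt (B x)) x := by
        rw [hinner, real_inner_comm, real_inner_self_eq_norm_sq]
      rw [this]
      calc (inner ℝ (Bt (B x)) x : ℝ) ≤ ‖Bt (B x)‖ * ‖x‖ := real_inner_le_norm _ _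
        _ = ‖LinearMap.toContinuousLinearMap (Matrix.toEuclideanLin (Aᵀ * A)) x‖ * ‖x‖ := by
            rw [hTapp]
        _ ≤ (matrixOpNorm (Aᵀ * A) * ‖x‖) * ‖x‖ := by
            gcongr
            exact ContinuousLinearMap.le_opNorm _ x
        _ = matrixOpNorm (Aᵀ * A) * ‖x‖ ^ 2 := by ring
    have hN0 : 0 ≤ matrixOpNorm (Aᵀ * A) := norm_nonneg _
    have hBle : ‖B‖ ≤ Real.sqrt (matrixOpNorm (Aᵀ * A)) := by
      apply ContinuousLinearMap.opNorm_le_bound _ (Real.sqrt_nonneg _)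
      intro x
      have := h1 x
      have h2 : ‖B x‖ ≤ Real.sqrt (matrixOpNorm (Aᵀ * A) * ‖x‖ ^ 2) := by
        rw [← Real.sqrt_sq (norm_nonneg (B x))]
        exact Real.sqrt_le_sqrt this
      rwa [Real.sqrt_mul hN0, Real.sqrt_sq (norm_nonneg x)] at h2
    calc ‖B‖ ^ 2 ≤ Real.sqrt (matrixOpNorm (Aᵀ * A)) ^ 2 := by
          gcongr
      _ = matrixOpNorm (Aᵀ * A) := Real.sq_sqrt hN0
  -- α ‖B‖² ≤ 2
  have hαB : α * ‖B‖ ^ 2 ≤ 2 := by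
    rcases eq_or_lt_of_le (norm_nonneg
        (LinearMap.toContinuousLinearMap (Matrix.toEuclideanLin (Aᵀ * A)))) with h0 | h0
    · exfalso
      have : matrixOpNorm (Aᵀ * A) = 0 := h0.symm
      rw [this] at hα₂
      simp at hα₂
      linarith
    · have hN : 0 < matrixOpNorm (Aᵀ * A) := h0
      have h2 : α * matrixOpNorm (Aᵀ * A) ≤ 2 := by
        rw [div_eq_mul_inv] at hα₂
        calc α * matrixOpNorm (Aᵀ * A) ≤ 2 * (matrixOpNorm (Aᵀ * A))⁻¹ * matrixOpNorm (Aᵀ * A) := by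
              gcongr
          _ = 2 := by field_simp
      calc α * ‖B‖ ^ 2 ≤ α * matrixOpNorm (Aᵀ * A) := by gcongr
        _ ≤ 2 := h2
  -- contraction: ‖x - α • Bt (B x)‖ ≤ ‖x‖
  have hcontr : ∀ x : EuclideanSpace ℝ (Fin K), ‖x - α • Bt (B x)‖ ≤ ‖x‖ := by
    intro x
    have hsq : ‖x - α • Bt (B x)‖ ^ 2 ≤ ‖x‖ ^ 2 := by
      have hexp : ‖x - α • Bt (B x)‖ ^ 2
          = ‖x‖ ^ 2 - 2 * inner ℝ x (α • Bt (B x)) + ‖α • Bt (B x)‖ ^ 2 := by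
        exact norm_sub_sq_real _ _
      have hip : (inner ℝ x (α • Bt (B x)) : ℝ) = α * ‖B x‖ ^ 2 := by
        rw [real_inner_smul_right, real_inner_comm, hinner, real_inner_self_eq_norm_sq]
      have hnsm : ‖α • Bt (B x)‖ ≤ α * (‖B‖ * ‖B x‖) := by
        rw [norm_smul, Real.norm_eq_abs, abs_of_pos hα₀]
        gcongr
        calc ‖Bt (B x)‖ ≤ ‖Bt‖ * ‖B x‖ := ContinuousLinearMap.le_opNorm _ _
          _ = ‖B‖ * ‖B x‖ := by rw [hnormBt]
      have hnsm2 : ‖α • Bt (B x)‖ ^ 2 ≤ α ^ 2 * ‖B‖ ^ 2 * ‖B x‖ ^ 2 := by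
        calc ‖α • Bt (B x)‖ ^ 2 ≤ (α * (‖B‖ * ‖B x‖)) ^ 2 := by
              gcongr
          _ = α ^ 2 * ‖B‖ ^ 2 * ‖B x‖ ^ 2 := by ring
      have hkey : α ^ 2 * ‖B‖ ^ 2 * ‖B x‖ ^ 2 ≤ 2 * (α * ‖B x‖ ^ 2) := by
        have h1 : α * ‖B‖ ^ 2 * (α * ‖B x‖ ^ 2) ≤ 2 * (α * ‖B x‖ ^ 2) := by
          have h2 : 0 ≤ α * ‖B x‖ ^ 2 := by positivity
          nlinarith
        nlinarith
      rw [hexp, hip]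
      nlinarith
    have := Real.sqrt_le_sqrt hsq
    rwa [Real.sqrt_sq (norm_nonneg _), Real.sqrt_sq (norm_nonneg _)] at this
  -- main inequality
  set d := s₁ - s₂ with hd
  set e := y₁ - y₂ with he
  have hmain : ‖d‖ ≤ L₀ * (‖d‖ + α * ‖B‖ * ‖e‖) := by
    have hstep : ‖d‖ ≤ L₀ * ‖(d - α • Bt (B d)) + α • Bt e‖ := by
      have hz : (s₁ - α • Matrix.toEuclideanLin Aᵀ (Matrix.toEuclideanLin A s₁ - y₁))
            - (s₂ - α • Matrix.toEuclideanLin Aᵀ (Matrix.toEuclideanLin A s₂ - y₂))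
          = (d - α • Bt (B d)) + α • Bt e := by
        show (s₁ - α • Bt (B s₁ - y₁)) - (s₂ - α • Bt (B s₂ - y₂))
          = (d - α • Bt (B d)) + α • Bt e
        rw [hd, he]
        simp only [map_sub, smul_sub]
        abel
      calc ‖d‖ = ‖D (s₁ - α • Matrix.toEuclideanLin Aᵀ (Matrix.toEuclideanLin A s₁ - y₁))
            - D (s₂ - α • Matrix.toEuclideanLin Aᵀ (Matrix.toEuclideanLin A s₂ - y₂))‖ := by
            rw [hd]; nth_rewrite 1 [hs₁, hs₂]; rfl
        _ ≤ L₀ * ‖(s₁ - α • Matrix.toEuclideanLin Aᵀ (Matrix.toEuclideanLin A s₁ - y₁))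
            - (s₂ - α • Matrix.toEuclideanLin Aᵀ (Matrix.toEuclideanLin A s₂ - y₂))‖ := hD _ _
        _ = L₀ * ‖(d - α • Bt (B d)) + α • Bt e‖ := by rw [hz]
    calc ‖d‖ ≤ L₀ * ‖(d - α • Bt (B d)) + α • Bt e‖ := hstep
      _ ≤ L₀ * (‖d - α • Bt (B d)‖ + ‖α • Bt e‖) := by
          gcongr; exact norm_add_le _ _
      _ ≤ L₀ * (‖d‖ + α * ‖B‖ * ‖e‖) := by
          gcongr
          · exact hcontr d
          · calc ‖α • Bt e‖ = α * ‖Bt e‖ := by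
                  rw [norm_smul, Real.norm_eq_abs, abs_of_pos hα₀]
              _ ≤ α * (‖Bt‖ * ‖e‖) := by gcongr; exact ContinuousLinearMap.le_opNorm _ _
              _ = α * ‖B‖ * ‖e‖ := by rw [hnormBt]; ring
  have h1L : 0 < 1 - L₀ := by linarith
  have hexp : L₀ * (‖d‖ + α * ‖B‖ * ‖e‖) = L₀ * ‖d‖ + L₀ * (α * ‖B‖ * ‖e‖) := by ring
  rw [hexp] at hmain
  have hsub : (1 - L₀) * ‖d‖ ≤ L₀ * (α * ‖B‖ * ‖e‖) := by linarith
  have hfin : ‖d‖ ≤ (α * ‖B‖ * L₀ / (1 - L₀)) * ‖e‖ := by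
    rw [div_mul_eq_mul_div, le_div_iff₀ h1L]
    calc ‖d‖ * (1 - L₀) = (1 - L₀) * ‖d‖ := by ring
      _ ≤ L₀ * (α * ‖B‖ * ‖e‖) := hsub
      _ = α * ‖B‖ * L₀ * ‖e‖ := by ring
  have hOp : matrixOpNorm A = ‖B‖ := rfl
  rw [hOp]
  exact hfin
end
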